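/- arXiv:2011.03205 — 10 statements merged into one kernel-verified Lean document; each statement's English description precedes it below -/
import Mathlib

section
/- Let M be a matrix with rows indexed by a set X and columns indexed by a set Y, over any field. For subsets X1, X2 of X and Y1, Y2 of Y, rank(M[X1,Y1]) + rank(M[X2,Y2]) >= rank(M[X1∩X2, Y1∪Y2]) + rank(M[X1∪X2, Y1∩Y2]). -/
set_option linter.unusedSectionVars false

open Submodule LinearMap FiniteDimensional Module

-- finrank of image of a submodule
lemma aux_finrank_map {K V W : Type*} [Field K] [AddCommGroup V] [Module K V]
    [AddCommGroup W] [Module K W] [FiniteDimensional K V]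
    (f : V →ₗ[K] W) (p : Submodule K V) :
    finrank K (p.map f) + finrank K (LinearMap.ker f) = finrank K ↥(p ⊔ LinearMap.ker f) := by
  set q := p ⊔ LinearMap.ker f with hq
  have hker : LinearMap.ker f ≤ q := le_sup_right
  let g : ↥q →ₗ[K] W := f.comp q.subtype
  have hrange : LinearMap.range g = p.map f := by
    rw [LinearMap.range_comp, Submodule.range_subtype, hq, Submodule.map_sup]
    have : (LinearMap.ker f).map f = ⊥ := by
      ext x; simp [Submodule.mem_map, LinearMap.mem_ker]
      constructor
      · rintro ⟨y, hy, rfl⟩; exact hy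
      · rintro rfl; exact ⟨0, by simp, by simp⟩
    rw [this, sup_bot_eq]
  have hkg : LinearMap.ker g = (LinearMap.ker f).comap q.subtype := by
    ext x; simp [g, LinearMap.mem_ker]
  have h1 := LinearMap.finrank_range_add_finrank_ker g
  rw [hrange, hkg] at h1
  rw [(Submodule.comapSubtypeEquivOfLe hker).finrank_eq] at h1
  exact h1

section Main
variable {K X Y : Type} [Field K] [Fintype X] [Fintype Y] [DecidableEq X] [DecidableEq Y]
    (M : Matrix X Y K)

/-- coordinate restriction map -/
noncomputable def piB (B : Finset Y) : (Y → K) →ₗ[K] (↥B → K) :=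
  LinearMap.funLeft K K (fun j : ↥B => (j : Y))

lemma mem_ker_piB {B : Finset Y} {f : Y → K} :
    f ∈ LinearMap.ker (piB (K := K) B) ↔ ∀ j ∈ B, f j = 0 := by
  simp [piB, LinearMap.mem_ker, LinearMap.funLeft, funext_iff, Subtype.forall]

lemma rank_submatrix_eq (A : Finset X) (B : Finset Y) :
    (M.submatrix (fun i : ↥A => i.1) (fun j : ↥B => j.1)).rank +
      finrank K (LinearMap.ker (piB (K := K) B)) =
    finrank K ↥((Submodule.span K (Set.range (fun i : ↥A => M i.1))) ⊔
      LinearMap.ker (piB (K := K) B)) := by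
  rw [Matrix.rank_eq_finrank_span_row]
  have h : Submodule.span K (Set.range (M.submatrix (fun i : ↥A => i.1) (fun j : ↥B => j.1)))
      = (Submodule.span K (Set.range (fun i : ↥A => M i.1))).map (piB (K := K) B) := by
    rw [Submodule.map_span, ← Set.range_comp]
    rfl
  rw [show Set.range (M.submatrix (fun i : ↥A => i.1) (fun j : ↥B => j.1)).row =
      Set.range (M.submatrix (fun i : ↥A => i.1) (fun j : ↥B => j.1)) from rfl, h, aux_finrank_map]

set_option linter.unusedSectionVars false

lemma ker_piB_inf (Y1 Y2 : Finset Y) :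
    LinearMap.ker (piB (K := K) Y1) ⊓ LinearMap.ker (piB (K := K) Y2) =
      LinearMap.ker (piB (K := K) (Y1 ∪ Y2)) := by
  ext f
  simp only [Submodule.mem_inf, mem_ker_piB, Finset.mem_union]
  constructor
  · rintro ⟨h1, h2⟩ j (hj | hj); exacts [h1 j hj, h2 j hj]
  · intro h; exact ⟨fun j hj => h j (Or.inl hj), fun j hj => h j (Or.inr hj)⟩

lemma ker_piB_sup (Y1 Y2 : Finset Y) :
    LinearMap.ker (piB (K := K) Y1) ⊔ LinearMap.ker (piB (K := K) Y2) =
      LinearMap.ker (piB (K := K) (Y1 ∩ Y2)) := by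
  apply le_antisymm
  · apply sup_le <;> intro f hf <;> rw [mem_ker_piB] at hf ⊢ <;> intro j hj <;>
      rw [Finset.mem_inter] at hj
    · exact hf j hj.1
    · exact hf j hj.2
  · intro f hf
    rw [mem_ker_piB] at hf
    rw [Submodule.mem_sup]
    refine ⟨fun j => if j ∈ Y1 then 0 else f j, ?_, fun j => if j ∈ Y1 then f j else 0, ?_, ?_⟩
    · rw [mem_ker_piB]; intro j hj; simp [hj]
    · rw [mem_ker_piB]; intro j hj
      by_cases h1 : j ∈ Y1
      · simp only [h1, if_true]; exact hf j (Finset.mem_inter.2 ⟨h1, hj⟩)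
      · simp [h1]
    · funext j; by_cases h1 : j ∈ Y1 <;> simp [h1]

lemma range_eq_image (A : Finset X) :
    Set.range (fun i : ↥A => M i.1) = M '' ↑A := (Set.image_eq_range M ↑A).symm

theorem rank_submatrix_submodular' (X1 X2 : Finset X) (Y1 Y2 : Finset Y) :
    (M.submatrix (fun i : ↥(X1 ∩ X2) => i.1) (fun j : ↥(Y1 ∪ Y2) => j.1)).rank +
      (M.submatrix (fun i : ↥(X1 ∪ X2) => i.1) (fun j : ↥(Y1 ∩ Y2) => j.1)).rank ≤
    (M.submatrix (fun i : ↥X1 => i.1) (fun j : ↥Y1 => j.1)).rank +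
      (M.submatrix (fun i : ↥X2 => i.1) (fun j : ↥Y2 => j.1)).rank := by
  classical
  set V1 := Submodule.span K (Set.range (fun i : ↥X1 => M i.1)) with hV1
  set V2 := Submodule.span K (Set.range (fun i : ↥X2 => M i.1)) with hV2
  set Vi := Submodule.span K (Set.range (fun i : ↥(X1 ∩ X2) => M i.1)) with hVi
  set Vu := Submodule.span K (Set.range (fun i : ↥(X1 ∪ X2) => M i.1)) with hVu
  set W1 := LinearMap.ker (piB (K := K) Y1) with hW1
  set W2 := LinearMap.ker (piB (K := K) Y2) with hW2
  have hVu_eq : Vu = V1 ⊔ V2 := by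
    rw [hVu, hV1, hV2, range_eq_image, range_eq_image, range_eq_image,
      Finset.coe_union, Set.image_union (M : X → Y → K) _ _, Submodule.span_union]
  have hVi1 : Vi ≤ V1 := by
    rw [hVi, hV1, range_eq_image, range_eq_image]
    exact Submodule.span_mono (Set.image_mono (by simp [Finset.coe_subset]))
  have hVi2 : Vi ≤ V2 := by
    rw [hVi, hV2, range_eq_image, range_eq_image]
    exact Submodule.span_mono (Set.image_mono (by simp [Finset.coe_subset]))
  have e1 := rank_submatrix_eq M X1 Y1
  have e2 := rank_submatrix_eq M X2 Y2
  have e3 := rank_submatrix_eq M (X1 ∩ X2) (Y1 ∪ Y2)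
  have e4 := rank_submatrix_eq M (X1 ∪ X2) (Y1 ∩ Y2)
  rw [← ker_piB_inf] at e3
  rw [← ker_piB_sup] at e4
  rw [← hV1, ← hW1] at e1
  rw [← hV2, ← hW2] at e2
  rw [← hVi, ← hW1, ← hW2] at e3
  rw [← hVu, ← hW1, ← hW2, hVu_eq] at e4
  have dimW : finrank K ↥(W1 ⊔ W2) + finrank K ↥(W1 ⊓ W2) =
      finrank K ↥W1 + finrank K ↥W2 := Submodule.finrank_sup_add_finrank_inf_eq W1 W2
  have dimV : finrank K ↥((V1 ⊔ W1) ⊔ (V2 ⊔ W2)) + finrank K ↥((V1 ⊔ W1) ⊓ (V2 ⊔ W2)) =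
      finrank K ↥(V1 ⊔ W1) + finrank K ↥(V2 ⊔ W2) :=
    Submodule.finrank_sup_add_finrank_inf_eq _ _
  have hsup : (V1 ⊔ W1) ⊔ (V2 ⊔ W2) = (V1 ⊔ V2) ⊔ (W1 ⊔ W2) := by
    rw [sup_assoc, sup_assoc]; congr 1
    rw [← sup_assoc, ← sup_assoc, sup_comm W1 V2]
  have hle : Vi ⊔ (W1 ⊓ W2) ≤ (V1 ⊔ W1) ⊓ (V2 ⊔ W2) := by
    apply sup_le
    · exact le_inf (hVi1.trans le_sup_left) (hVi2.trans le_sup_left)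
    · exact le_inf (inf_le_left.trans le_sup_right) (inf_le_right.trans le_sup_right)
  have hmono : finrank K ↥(Vi ⊔ (W1 ⊓ W2)) ≤ finrank K ↥((V1 ⊔ W1) ⊓ (V2 ⊔ W2)) :=
    Submodule.finrank_mono hle
  rw [hsup] at dimV
  omega

end Main


/-- Submodularity of matrix rank for submatrices:
`rank M[X1,Y1] + rank M[X2,Y2] ≥ rank M[X1∩X2, Y1∪Y2] + rank M[X1∪X2, Y1∩Y2]`. -/
theorem rank_submatrix_submodular {K X Y : Type} [Field K]
    [Fintype X] [Fintype Y] [DecidableEq X] [DecidableEq Y]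
    (M : Matrix X Y K) (X1 X2 : Finset X) (Y1 Y2 : Finset Y) :
    (M.submatrix (fun i : ↥(X1 ∩ X2) => i.1) (fun j : ↥(Y1 ∪ Y2) => j.1)).rank +
      (M.submatrix (fun i : ↥(X1 ∪ X2) => i.1) (fun j : ↥(Y1 ∩ Y2) => j.1)).rank ≤
    (M.submatrix (fun i : ↥X1 => i.1) (fun j : ↥Y1 => j.1)).rank +
      (M.submatrix (fun i : ↥X2 => i.1) (fun j : ↥Y2 => j.1)).rank := by
  exact rank_submatrix_submodular' M X1 X2 Y1 Y2
end

section
/- Let G be a graph with vertices a ≠ b, and let A ⊆ V(G)−{a}, B ⊆ V(G)−{b}. If b ∉ A and a ∉ B, then ρ_{G∖a∖b}(A∪B) + ρ_G(A∩B) ≤ ρ_{G∖a}(A) + ρ_{G∖b}(B). -/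
open Finset

variable {V : Type} [Fintype V] [DecidableEq V]

open scoped Classical

/-- The rank over GF(2) of the `X × Y` submatrix of the adjacency matrix of `G`. -/
noncomputable def cutRankOn (G : SimpleGraph V) (X Y : Finset V) : ℕ :=
  (Matrix.of (fun (i : ↥X) (j : ↥Y) => if G.Adj i.1 j.1 then (1 : ZMod 2) else 0)).rank

/-- The cut-rank of `X` in the graph `G` restricted to the vertex set `S`:
the rank over GF(2) of the `X × (S \ X)` submatrix of the adjacency matrix. -/
noncomputable def cutRank (G : SimpleGraph V) (S X : Finset V) : ℕ :=
  cutRankOn G X (S \ X)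

/-- `A` gives a split of the graph `G` restricted to the vertex set `S`. -/
def IsSplit (G : SimpleGraph V) (S A : Finset V) : Prop :=
  A ⊆ S ∧ cutRank G S A ≤ 1 ∧ 2 ≤ A.card ∧ 2 ≤ (S \ A).card

/-- The graph `G` restricted to the vertex set `S` is prime: connected and with no split. -/
def IsPrime (G : SimpleGraph V) (S : Finset V) : Prop :=
  (G.induce (↑S : Set V)).Connected ∧ ∀ A, ¬ IsSplit G S A

/-- `G` restricted to `S` is `k⁺ˡ`-rank-connected. -/
def RankConn (G : SimpleGraph V) (S : Finset V) (k l : ℤ) : Prop :=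
  ∀ X ⊆ S, (cutRank G S X : ℤ) < k →
    min (X.card : ℤ) (((S \ X).card : ℤ)) < k + l

/-- `G` restricted to `S` is `k`-rank-connected. -/
def RankConnAll (G : SimpleGraph V) (S : Finset V) (k : ℤ) : Prop :=
  ∀ m : ℤ, m ≤ k → RankConn G S m 0

def SideA (G : SimpleGraph V) (v w x : V) : Prop := G.Adj v x ∧ ¬ G.Adj w x ∧ x ≠ w
def SideB (G : SimpleGraph V) (v w x : V) : Prop := G.Adj w x ∧ ¬ G.Adj v x ∧ x ≠ v
def SideC (G : SimpleGraph V) (v w x : V) : Prop := G.Adj v x ∧ G.Adj w x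

/-- `x` and `y` lie in different ones among the three sets
`N(v)−N(w)−{w}`, `N(w)−N(v)−{v}`, `N(v)∩N(w)`. -/
def PivotToggle (G : SimpleGraph V) (v w x y : V) : Prop :=
  (SideA G v w x ∧ SideB G v w y) ∨ (SideB G v w x ∧ SideA G v w y) ∨
  (SideA G v w x ∧ SideC G v w y) ∨ (SideC G v w x ∧ SideA G v w y) ∨
  (SideB G v w x ∧ SideC G v w y) ∨ (SideC G v w x ∧ SideB G v w y)

set_option linter.unusedSectionVars false in
lemma pivotToggle_symm {G : SimpleGraph V} {v w x y : V}
    (h : PivotToggle G v w x y) : PivotToggle G v w y x := by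
  unfold PivotToggle at h ⊢; tauto

/-- The graph `G ∧ vw` obtained by pivoting the edge `vw`: toggle adjacency across the
three sets and swap the labels of `v` and `w`. -/
def pivot (G : SimpleGraph V) (v w : V) : SimpleGraph V where
  Adj a b := a ≠ b ∧
    Xor' (G.Adj (Equiv.swap v w a) (Equiv.swap v w b))
         (PivotToggle G v w (Equiv.swap v w a) (Equiv.swap v w b))
  symm := by
    constructor
    intro a b h
    obtain ⟨hne, hx⟩ := h
    refine ⟨hne.symm, ?_⟩
    have hA : G.Adj (Equiv.swap v w b) (Equiv.swap v w a) ↔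
        G.Adj (Equiv.swap v w a) (Equiv.swap v w b) := SimpleGraph.adj_comm _ _ _
    have hT : PivotToggle G v w (Equiv.swap v w b) (Equiv.swap v w a) ↔
        PivotToggle G v w (Equiv.swap v w a) (Equiv.swap v w b) :=
      ⟨pivotToggle_symm, pivotToggle_symm⟩
    rw [hA, hT]
    exact hx
  loopless := by constructor; intro a h; exact h.1 rfl

/-- One pivot step along an edge. -/
def PivotStep (G H : SimpleGraph V) : Prop := ∃ v w, G.Adj v w ∧ H = pivot G v w

/-- Pivot-equivalence: a sequence of pivots. -/
def PivotEquiv : SimpleGraph V → SimpleGraph V → Prop := Relation.ReflTransGen PivotStep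

/-- `A` is a fully closed set of `G` restricted to `S`. -/
def FullyClosed (G : SimpleGraph V) (S A : Finset V) : Prop :=
  A ⊆ S ∧ cutRank G S A = 2 ∧ 2 < A.card ∧
    ∀ u ∈ S, u ∉ A → cutRank G S A < cutRank G S (insert u A)

/-- `{a,b,c}` is a triplet of `G` (on vertex set `univ`). -/
def Triplet (G : SimpleGraph V) (a b c : V) : Prop :=
  cutRank G Finset.univ {a, b, c} = 2 ∧
  ∀ x ∈ ({a, b, c} : Finset V),
    cutRank G (Finset.univ \ {x}) (({a, b, c} : Finset V) \ {x}) = 2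

/-- `B` is a `k`-branched set of `G` restricted to `S`. -/
inductive KBranched (G : SimpleGraph V) (S : Finset V) (k : ℕ) : Finset V → Prop
  | single (v : V) (hv : v ∈ S) (h : cutRank G S {v} ≤ k) : KBranched G S k {v}
  | split (B B' : Finset V) (hB : B ⊆ S) (h : cutRank G S B ≤ k)
      (h1 : B' ⊆ B) (h2 : B'.Nonempty) (h3 : B' ≠ B)
      (hb1 : KBranched G S k B') (hb2 : KBranched G S k (B \ B')) : KBranched G S k B

/-- The rank-width of `G` restricted to `S`: the least `k` such that `S` is `k`-branched
(equivalently, the minimum width of a rank-decomposition). -/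
noncomputable def rankWidth (G : SimpleGraph V) (S : Finset V) : ℕ :=
  sInf {k | S = ∅ ∨ KBranched G S k S}

/-- `A` is a titanic set of `G` restricted to `S`. -/
def Titanic (G : SimpleGraph V) (S A : Finset V) : Prop :=
  ∀ A1 A2 A3 : Finset V, A1 ∪ A2 ∪ A3 = A →
    Disjoint A1 A2 → Disjoint A1 A3 → Disjoint A2 A3 →
    cutRank G S A ≤ cutRank G S A1 ∨ cutRank G S A ≤ cutRank G S A2 ∨
      cutRank G S A ≤ cutRank G S A3



/-- Coordinate truncation to `C`. -/
noncomputable def projC (C : Finset V) : (V → (ZMod 2)) →ₗ[(ZMod 2)] (V → (ZMod 2)) where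
  toFun f := fun j => if j ∈ C then f j else 0
  map_add' f g := by ext j; by_cases h : j ∈ C <;> simp [h]
  map_smul' c f := by ext j; by_cases h : j ∈ C <;> simp [h]

lemma mem_ker_projC {C : Finset V} {f : V → (ZMod 2)} :
    f ∈ LinearMap.ker (projC (V := V) C) ↔ ∀ j ∈ C, f j = 0 := by
  constructor
  · intro h j hj
    have := congrFun (show projC C f = 0 from h) j
    simpa [projC, hj] using this
  · intro h
    ext j
    by_cases hj : j ∈ C <;> simp [projC, hj, h j]

lemma ker_projC_union (C1 C2 : Finset V) :
    LinearMap.ker (projC (V := V) (C1 ∪ C2)) =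
      LinearMap.ker (projC C1) ⊓ LinearMap.ker (projC C2) := by
  ext f
  simp only [Submodule.mem_inf, mem_ker_projC, Finset.mem_union]
  constructor
  · intro h; exact ⟨fun j hj => h j (Or.inl hj), fun j hj => h j (Or.inr hj)⟩
  · rintro ⟨h1, h2⟩ j (hj | hj); exacts [h1 j hj, h2 j hj]

lemma ker_projC_inter (C1 C2 : Finset V) :
    LinearMap.ker (projC (V := V) (C1 ∩ C2)) =
      LinearMap.ker (projC C1) ⊔ LinearMap.ker (projC C2) := by
  apply le_antisymm
  · intro f hf
    rw [mem_ker_projC] at hf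
    rw [Submodule.mem_sup]
    refine ⟨fun j => if j ∈ C1 then 0 else f j, ?_, fun j => if j ∈ C1 then f j else 0, ?_, ?_⟩
    · rw [mem_ker_projC]; intro j hj; simp [hj]
    · rw [mem_ker_projC]; intro j hj
      by_cases h1 : j ∈ C1
      · simp [h1, hf j (Finset.mem_inter.2 ⟨h1, hj⟩)]
      · simp [h1]
    · ext j; by_cases h1 : j ∈ C1 <;> simp [h1]
  · apply sup_le <;> intro f hf <;> rw [mem_ker_projC] at hf ⊢ <;>
      intro j hj <;> rw [Finset.mem_inter] at hj
    exacts [hf j hj.1, hf j hj.2]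

set_option synthInstance.maxHeartbeats 1000000 in
lemma finrank_map_add (π : (V → (ZMod 2)) →ₗ[(ZMod 2)] (V → (ZMod 2))) (U : Submodule (ZMod 2) (V → (ZMod 2))) :
    Module.finrank (ZMod 2) (Submodule.map π U) +
      Module.finrank (ZMod 2) (U ⊓ LinearMap.ker π : Submodule (ZMod 2) (V → (ZMod 2))) =
      Module.finrank (ZMod 2) U := by
  have h := LinearMap.finrank_range_add_finrank_ker (π.domRestrict U)
  rw [LinearMap.range_domRestrict, LinearMap.ker_domRestrict] at h
  have e : (LinearMap.ker π).comap U.subtype = (U ⊓ LinearMap.ker π).comap U.subtype := by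
    ext x; simp
  have e2 := Submodule.comapSubtypeEquivOfLe
    (p := U ⊓ LinearMap.ker π) (q := U) inf_le_left
  have e3 : Module.finrank (ZMod 2) (Submodule.comap U.subtype (U ⊓ LinearMap.ker π)) =
      Module.finrank (ZMod 2) (U ⊓ LinearMap.ker π : Submodule (ZMod 2) (V → ZMod 2)) :=
    e2.finrank_eq
  rw [e, e3] at h
  exact h

set_option synthInstance.maxHeartbeats 1000000 in
lemma key_submodular (U1 U2 U' : Submodule (ZMod 2) (V → ZMod 2)) (h' : U' ≤ U1 ⊓ U2)
    (C1 C2 : Finset V) :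
    Module.finrank (ZMod 2) (Submodule.map (projC (C1 ∩ C2)) (U1 ⊔ U2)) +
      Module.finrank (ZMod 2) (Submodule.map (projC (C1 ∪ C2)) U') ≤
    Module.finrank (ZMod 2) (Submodule.map (projC C1) U1) +
      Module.finrank (ZMod 2) (Submodule.map (projC C2) U2) := by
  have h1 := finrank_map_add (projC C1) U1
  have h2 := finrank_map_add (projC C2) U2
  have hs := finrank_map_add (projC (C1 ∩ C2)) (U1 ⊔ U2)
  have hi := finrank_map_add (projC (C1 ∪ C2)) (U1 ⊓ U2)
  have hsupinf := Submodule.finrank_sup_add_finrank_inf_eq U1 U2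
  have hW := Submodule.finrank_sup_add_finrank_inf_eq (U1 ⊓ LinearMap.ker (projC C1)) (U2 ⊓ LinearMap.ker (projC C2))
  -- monotonicity for the U' term
  have hmap' : Module.finrank (ZMod 2) (Submodule.map (projC (C1 ∪ C2)) U') ≤
      Module.finrank (ZMod 2) (Submodule.map (projC (C1 ∪ C2)) (U1 ⊓ U2)) :=
    Submodule.finrank_mono (Submodule.map_mono h')
  have hk_inter : LinearMap.ker (projC (V := V) (C1 ∩ C2)) = LinearMap.ker (projC (V := V) C1) ⊔ LinearMap.ker (projC (V := V) C2) := ker_projC_inter C1 C2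
  have hk_union : LinearMap.ker (projC (V := V) (C1 ∪ C2)) = LinearMap.ker (projC (V := V) C1) ⊓ LinearMap.ker (projC (V := V) C2) := ker_projC_union C1 C2
  have m1 : Module.finrank (ZMod 2) ((U1 ⊓ LinearMap.ker (projC C1)) ⊔ (U2 ⊓ LinearMap.ker (projC C2)) : Submodule (ZMod 2) (V → ZMod 2)) ≤
      Module.finrank (ZMod 2)
        ((U1 ⊔ U2) ⊓ LinearMap.ker (projC (C1 ∩ C2)) : Submodule (ZMod 2) (V → ZMod 2)) := by
    apply Submodule.finrank_mono
    rw [hk_inter]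
    apply sup_le
    · exact le_inf (inf_le_left.trans le_sup_left) (inf_le_right.trans le_sup_left)
    · exact le_inf (inf_le_left.trans le_sup_right) (inf_le_right.trans le_sup_right)
  have m2 : Module.finrank (ZMod 2) ((U1 ⊓ LinearMap.ker (projC C1)) ⊓ (U2 ⊓ LinearMap.ker (projC C2)) : Submodule (ZMod 2) (V → ZMod 2)) ≤
      Module.finrank (ZMod 2)
        ((U1 ⊓ U2) ⊓ LinearMap.ker (projC (C1 ∪ C2)) : Submodule (ZMod 2) (V → ZMod 2)) := by
    apply Submodule.finrank_mono
    rw [hk_union]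
    refine le_inf (le_inf ?_ ?_) (le_inf ?_ ?_)
    · exact inf_le_left.trans inf_le_left
    · exact inf_le_right.trans inf_le_left
    · exact inf_le_left.trans inf_le_right
    · exact inf_le_right.trans inf_le_right
  omega

/-- Row `i` of the adjacency matrix over GF(2). -/
noncomputable def rowG (G : SimpleGraph V) (i : V) : V → ZMod 2 :=
  fun j => if G.Adj i j then 1 else 0

noncomputable def extY (Y : Finset V) : (↥Y → ZMod 2) →ₗ[ZMod 2] (V → ZMod 2) where
  toFun f := fun j => if h : j ∈ Y then f ⟨j, h⟩ else 0
  map_add' f g := by ext j; by_cases h : j ∈ Y <;> simp [h]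
  map_smul' c f := by ext j; by_cases h : j ∈ Y <;> simp [h]

lemma extY_injective (Y : Finset V) : Function.Injective (extY (V := V) Y) := by
  rw [← LinearMap.ker_eq_bot]
  ext f
  simp only [LinearMap.mem_ker, Submodule.mem_bot]
  constructor
  · intro h
    ext ⟨j, hj⟩
    have := congrFun h j
    simpa [extY, hj] using this
  · rintro rfl; simp

set_option synthInstance.maxHeartbeats 1000000 in
lemma cutRankOn_eq (G : SimpleGraph V) (X Y : Finset V) :
    cutRankOn G X Y =
      Module.finrank (ZMod 2)
        (Submodule.map (projC Y) (Submodule.span (ZMod 2) (rowG G '' (↑X : Set V)))) := by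
  rw [cutRankOn, Matrix.rank_eq_finrank_span_row]
  have he := extY_injective (V := V) Y
  set N : Matrix ↥X ↥Y (ZMod 2) :=
    Matrix.of (fun (i : ↥X) (j : ↥Y) => if G.Adj i.1 j.1 then (1 : ZMod 2) else 0) with hN
  have hrow : ∀ i : ↥X, extY Y (N i) = projC Y (rowG G i.1) := by
    intro i
    ext j
    by_cases hj : j ∈ Y <;> simp [extY, projC, hj, hN, rowG]
  have h1 : Module.finrank (ZMod 2) (Submodule.span (ZMod 2) (Set.range N)) =
      Module.finrank (ZMod 2)
        (Submodule.map (extY Y) (Submodule.span (ZMod 2) (Set.range N))) :=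
    (Submodule.equivMapOfInjective _ he _).finrank_eq
  show Module.finrank (ZMod 2) (Submodule.span (ZMod 2) (Set.range N)) = _
  rw [h1, Submodule.map_span]
  have hsets : ⇑(extY Y) '' Set.range N = (⇑(projC Y) ∘ rowG G) '' (↑X : Set V) := by
    ext f
    constructor
    · rintro ⟨g, ⟨i, rfl⟩, rfl⟩
      exact ⟨i.1, i.2, (hrow i).symm⟩
    · rintro ⟨v, hv, rfl⟩
      exact ⟨N ⟨v, hv⟩, ⟨⟨v, hv⟩, rfl⟩, hrow ⟨v, hv⟩⟩
  rw [hsets, Set.image_comp, ← Submodule.map_span]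


set_option maxHeartbeats 1000000 in
set_option synthInstance.maxHeartbeats 1000000 in
theorem cutRank_del_del_union {G : SimpleGraph V} {a b : V} (hab : a ≠ b)
    {A B : Finset V} (hA : A ⊆ Finset.univ \ {a}) (hB : B ⊆ Finset.univ \ {b})
    (hbA : b ∉ A) (haB : a ∉ B) :
    cutRank G ((Finset.univ \ {a}) \ {b}) (A ∪ B) + cutRank G Finset.univ (A ∩ B) ≤
      cutRank G (Finset.univ \ {a}) A + cutRank G (Finset.univ \ {b}) B := by
  have haA : a ∉ A := fun h => by simpa using (hA h)
  have hbB : b ∉ B := fun h => by simpa using (hB h)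
  set C1 : Finset V := (Finset.univ \ {a}) \ A with hC1
  set C2 : Finset V := (Finset.univ \ {b}) \ B with hC2
  have hmemC1 : ∀ x, x ∈ C1 ↔ (x ≠ a ∧ x ∉ A) := by
    intro x; simp [hC1]
  have hmemC2 : ∀ x, x ∈ C2 ↔ (x ≠ b ∧ x ∉ B) := by
    intro x; simp [hC2]
  have hset1 : ((Finset.univ \ {a}) \ {b}) \ (A ∪ B) = C1 ∩ C2 := by
    ext x
    simp only [Finset.mem_sdiff, Finset.mem_union, Finset.mem_inter, Finset.mem_singleton,
      Finset.mem_univ, true_and, hmemC1, hmemC2]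
    tauto
  have hset2 : Finset.univ \ (A ∩ B) = C1 ∪ C2 := by
    ext x
    simp only [Finset.mem_sdiff, Finset.mem_inter, Finset.mem_union, Finset.mem_univ, true_and,
      hmemC1, hmemC2]
    constructor
    · intro h
      by_cases hxA : x ∈ A
      · have hxB : x ∉ B := fun hxB => h ⟨hxA, hxB⟩
        right
        exact ⟨fun hxb => hbA (hxb ▸ hxA), hxB⟩
      · by_cases hxa : x = a
        · subst hxa; right; exact ⟨hab, haB⟩
        · left; exact ⟨hxa, hxA⟩
    · rintro (⟨_, hxA⟩ | ⟨_, hxB⟩) ⟨h1, h2⟩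
      exacts [hxA h1, hxB h2]
  unfold cutRank
  rw [hset1, hset2]
  rw [cutRankOn_eq, cutRankOn_eq, cutRankOn_eq, cutRankOn_eq]
  have hspan_union : Submodule.span (ZMod 2) (rowG G '' (↑(A ∪ B) : Set V)) =
      Submodule.span (ZMod 2) (rowG G '' (↑A : Set V)) ⊔
        Submodule.span (ZMod 2) (rowG G '' (↑B : Set V)) := by
    rw [Finset.coe_union, Set.image_union, Submodule.span_union]
  have hspan_inter : Submodule.span (ZMod 2) (rowG G '' (↑(A ∩ B) : Set V)) ≤
      Submodule.span (ZMod 2) (rowG G '' (↑A : Set V)) ⊓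
        Submodule.span (ZMod 2) (rowG G '' (↑B : Set V)) := by
    refine le_inf ?_ ?_ <;> apply Submodule.span_mono <;> apply Set.image_mono
    · exact fun x hx => by simp at hx ⊢; exact hx.1
    · exact fun x hx => by simp at hx ⊢; exact hx.2
  rw [hspan_union]
  exact key_submodular _ _ _ hspan_inter C1 C2
end

section
/- Let G be a graph with vertices a ≠ b, and let A ⊆ V(G)−{a}, B ⊆ V(G)−{b}. If b ∈ A and a ∉ B, then ρ_{G∖b}(A∩B) + ρ_{G∖a}(A∪B) ≤ ρ_{G∖a}(A) + ρ_{G∖b}(B). -/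
open Finset

variable {V : Type} [Fintype V] [DecidableEq V]

open scoped Classical

section AuxRank
open Module Submodule LinearMap
set_option linter.unusedSectionVars false

section Core
variable {K : Type} [Field K] {ι : Type} [Fintype ι] [DecidableEq ι]

/-- Projection onto coordinates in `X`. -/
def projL (K : Type) [Field K] (X : Finset ι) : (ι → K) →ₗ[K] (ι → K) where
  toFun v := fun i => if i ∈ X then v i else 0
  map_add' := by intro u v; funext i; by_cases h : i ∈ X <;> simp [h]
  map_smul' := by intro c v; funext i; by_cases h : i ∈ X <;> simp [h]

/-- Coordinate subspace supported on `Y`. -/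
def coordSub (K : Type) [Field K] (Y : Finset ι) : Submodule K (ι → K) where
  carrier := {v | ∀ j ∉ Y, v j = 0}
  add_mem' := by intro u v hu hv j hj; simp [hu j hj, hv j hj]
  zero_mem' := by intro j hj; rfl
  smul_mem' := by intro c v hv j hj; simp [hv j hj]

lemma mem_coordSub {Y : Finset ι} {v : ι → K} : v ∈ coordSub K Y ↔ ∀ j ∉ Y, v j = 0 :=
  Iff.rfl

lemma ker_projL (X : Finset ι) : LinearMap.ker (projL K X) = coordSub K Xᶜ := by
  ext v
  simp only [LinearMap.mem_ker, mem_coordSub, Finset.mem_compl, not_not]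
  constructor
  · intro h j hj
    have := congrFun h j
    simpa [projL, hj] using this
  · intro h
    funext i
    by_cases hi : i ∈ X
    · simpa [projL, hi] using h i hi
    · simp [projL, hi]

lemma coordSub_inf (Y1 Y2 : Finset ι) :
    coordSub K (Y1 ∩ Y2) = coordSub K Y1 ⊓ coordSub K Y2 := by
  ext v
  simp only [Submodule.mem_inf, mem_coordSub, Finset.mem_inter]
  constructor
  · exact fun h => ⟨fun j hj => h j (fun hc => hj hc.1), fun j hj => h j (fun hc => hj hc.2)⟩
  · rintro ⟨h1, h2⟩ j hj
    by_cases hj1 : j ∈ Y1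
    · exact h2 j (fun hc => hj ⟨hj1, hc⟩)
    · exact h1 j hj1

lemma coordSub_sup (Y1 Y2 : Finset ι) :
    coordSub K (Y1 ∪ Y2) = coordSub K Y1 ⊔ coordSub K Y2 := by
  refine le_antisymm ?_ (sup_le (fun v hv j hj => hv j (fun h => hj (Finset.mem_union_left _ h)))
    (fun v hv j hj => hv j (fun h => hj (Finset.mem_union_right _ h))))
  intro v hv
  rw [Submodule.mem_sup]
  refine ⟨fun i => if i ∈ Y1 then v i else 0, fun j hj => by simp [hj],
    v - fun i => if i ∈ Y1 then v i else 0, ?_, by abel⟩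
  intro j hj
  by_cases hj1 : j ∈ Y1
  · simp [hj1]
  · have := hv j (by simp [hj, hj1])
    simp [hj1, this]

/-- Extension by zero from coordinates in `Y`. -/
def extL (K : Type) [Field K] (Y : Finset ι) : (↥Y → K) →ₗ[K] (ι → K) where
  toFun v := fun j => if h : j ∈ Y then v ⟨j, h⟩ else 0
  map_add' := by intro u v; funext j; by_cases h : j ∈ Y <;> simp [h]
  map_smul' := by intro c v; funext j; by_cases h : j ∈ Y <;> simp [h]

lemma extL_injective (Y : Finset ι) : Function.Injective (extL K Y) := by
  intro u v h
  funext j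
  have := congrFun h j.1
  simpa [extL, j.2] using this

lemma range_extL (Y : Finset ι) : LinearMap.range (extL K Y) = coordSub K Y := by
  ext v
  constructor
  · rintro ⟨u, rfl⟩ j hj
    simp [extL, hj]
  · intro hv
    refine ⟨fun j => v j.1, ?_⟩
    funext j
    by_cases h : j ∈ Y
    · simp [extL, h]
    · simp [extL, h, hv j h]

lemma finrank_map_eq_of_inj {V W : Type} [AddCommGroup V] [Module K V]
    [AddCommGroup W] [Module K W]
    (f : V →ₗ[K] W) (hf : Function.Injective f) (p : Submodule K V) :
    finrank K (p.map f) = finrank K p :=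
  (LinearEquiv.finrank_eq (Submodule.equivMapOfInjective f hf p)).symm

/-- dimension formula for image of a submodule. -/
lemma finrank_map_add_s2 (f : (ι → K) →ₗ[K] (ι → K)) (U : Submodule K (ι → K)) :
    finrank K (U.map f) + finrank K (U ⊓ LinearMap.ker f : Submodule K (ι → K)) = finrank K U := by
  have h1 : LinearMap.range (f.domRestrict U) = U.map f := LinearMap.range_domRestrict U f
  have h2 : LinearMap.ker (f.domRestrict U) = (LinearMap.ker f).comap U.subtype :=
    LinearMap.ker_domRestrict U f
  have h3 : finrank K ((LinearMap.ker f).comap U.subtype) =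
      finrank K (U ⊓ LinearMap.ker f : Submodule K (ι → K)) := by
    rw [← finrank_map_eq_of_inj U.subtype (Submodule.injective_subtype U)
      ((LinearMap.ker f).comap U.subtype), Submodule.map_comap_subtype]
  have := LinearMap.finrank_range_add_finrank_ker (f.domRestrict U)
  rw [h1, h2, h3] at this
  simpa using this

/-- The key rank quantity. -/
noncomputable def subrk (M : Matrix ι ι K) (X Y : Finset ι) : ℕ :=
  finrank K ((coordSub K Y).map (projL K X ∘ₗ M.mulVecLin))

lemma subrk_eq_rank (M : Matrix ι ι K) (X Y : Finset ι) :
    subrk M X Y = (M.submatrix (Subtype.val : ↥X → ι) (Subtype.val : ↥Y → ι)).rank := by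
  unfold subrk
  rw [← range_extL Y, ← LinearMap.range_comp]
  have key : (projL K X ∘ₗ M.mulVecLin) ∘ₗ extL K Y
      = extL K X ∘ₗ (M.submatrix (Subtype.val : ↥X → ι) (Subtype.val : ↥Y → ι)).mulVecLin := by
    apply LinearMap.ext
    intro v
    funext i
    simp only [LinearMap.comp_apply, Matrix.mulVecLin_apply, projL, extL,
      LinearMap.coe_mk, AddHom.coe_mk]
    by_cases hi : i ∈ X
    · simp only [hi, if_pos, dif_pos]
      show (M.mulVec _) i = _
      simp only [Matrix.mulVec, dotProduct, Matrix.submatrix_apply]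
      have : ∀ j : ι, M i j * (if h : j ∈ Y then v ⟨j, h⟩ else 0)
          = if h : j ∈ Y then M i j * v ⟨j, h⟩ else 0 := by
        intro j; by_cases h : j ∈ Y <;> simp [h]
      rw [Finset.sum_congr rfl (fun j _ => this j),
        ← Finset.sum_subset (Finset.subset_univ Y) (fun j _ hj => dif_neg hj),
        ← Finset.sum_coe_sort Y]
      exact Finset.sum_congr rfl (fun j _ => by rw [dif_pos j.2])
    · simp [hi]
  rw [key, LinearMap.range_comp, finrank_map_eq_of_inj _ (extL_injective X), Matrix.rank]

end Core

section Core2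
variable {K : Type} [Field K] {ι : Type} [Fintype ι] [DecidableEq ι]

lemma subrk_bimodular (M : Matrix ι ι K) (X1 X2 Y1 Y2 : Finset ι) :
    subrk M (X1 ∩ X2) (Y1 ∪ Y2) + subrk M (X1 ∪ X2) (Y1 ∩ Y2) ≤
      subrk M X1 Y1 + subrk M X2 Y2 := by
  set f := M.mulVecLin with hf
  set U1 := (coordSub K Y1).map f with hU1
  set U2 := (coordSub K Y2).map f with hU2
  set K1 := LinearMap.ker (projL K X1) with hK1
  set K2 := LinearMap.ker (projL K X2) with hK2
  have hmap : ∀ X Y : Finset ι, subrk M X Y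
      = finrank K (((coordSub K Y).map f).map (projL K X)) := by
    intro X Y; unfold subrk; rw [Submodule.map_comp]
  have hUsup : (coordSub K (Y1 ∪ Y2)).map f = U1 ⊔ U2 := by
    rw [coordSub_sup, Submodule.map_sup]
  have hUinf : (coordSub K (Y1 ∩ Y2)).map f ≤ U1 ⊓ U2 := by
    rw [coordSub_inf]
    exact le_inf (Submodule.map_mono inf_le_left) (Submodule.map_mono inf_le_right)
  have hker_inter : LinearMap.ker (projL K (X1 ∩ X2)) = K1 ⊔ K2 := by
    rw [hK1, hK2, ker_projL, ker_projL, ker_projL, Finset.compl_inter, coordSub_sup]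
  have hker_union : LinearMap.ker (projL K (X1 ∪ X2)) = K1 ⊓ K2 := by
    rw [hK1, hK2, ker_projL, ker_projL, ker_projL, Finset.compl_union, coordSub_inf]
  have e1 := finrank_map_add_s2 (projL K X1) U1
  have e2 := finrank_map_add_s2 (projL K X2) U2
  have e3 := finrank_map_add_s2 (projL K (X1 ∩ X2)) (U1 ⊔ U2)
  have e4 := finrank_map_add_s2 (projL K (X1 ∪ X2)) (U1 ⊓ U2)
  rw [← hK1] at e1
  rw [← hK2] at e2
  rw [hker_inter] at e3
  rw [hker_union] at e4
  have e5 : finrank K ↥(U1 ⊔ U2) + finrank K ↥(U1 ⊓ U2) = finrank K U1 + finrank K U2 :=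
    Submodule.finrank_sup_add_finrank_inf_eq U1 U2
  have e6 : finrank K ↥(U1 ⊓ K1) + finrank K ↥(U2 ⊓ K2) ≤
      finrank K ↥((U1 ⊔ U2) ⊓ (K1 ⊔ K2)) + finrank K ↥((U1 ⊓ U2) ⊓ (K1 ⊓ K2)) := by
    have h7 := Submodule.finrank_sup_add_finrank_inf_eq (U1 ⊓ K1) (U2 ⊓ K2)
    have h8 : (U1 ⊓ K1) ⊔ (U2 ⊓ K2) ≤ (U1 ⊔ U2) ⊓ (K1 ⊔ K2) :=
      sup_le (le_inf (inf_le_left.trans le_sup_left) (inf_le_right.trans le_sup_left))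
        (le_inf (inf_le_left.trans le_sup_right) (inf_le_right.trans le_sup_right))
    have h9 : (U1 ⊓ K1) ⊓ (U2 ⊓ K2) ≤ (U1 ⊓ U2) ⊓ (K1 ⊓ K2) := by
      refine le_inf (le_inf ?_ ?_) (le_inf ?_ ?_)
      · exact inf_le_left.trans inf_le_left
      · exact inf_le_right.trans inf_le_left
      · exact inf_le_left.trans inf_le_right
      · exact inf_le_right.trans inf_le_right
    have h10 := Submodule.finrank_mono h8
    have h11 := Submodule.finrank_mono h9
    omega
  have g1 : subrk M (X1 ∩ X2) (Y1 ∪ Y2)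
      = finrank K ((U1 ⊔ U2).map (projL K (X1 ∩ X2))) := by rw [hmap, hUsup]
  have g2 : subrk M (X1 ∪ X2) (Y1 ∩ Y2)
      ≤ finrank K ((U1 ⊓ U2).map (projL K (X1 ∪ X2))) := by
    rw [hmap]
    exact Submodule.finrank_mono (Submodule.map_mono hUinf)
  rw [hmap X1 Y1, hmap X2 Y2, ← hU1, ← hU2]
  omega

end Core2

variable {V : Type} [Fintype V] [DecidableEq V]


end AuxRank

theorem cutRank_del_del_mixed {G : SimpleGraph V} {a b : V} (hab : a ≠ b)
    {A B : Finset V} (hA : A ⊆ Finset.univ \ {a}) (hB : B ⊆ Finset.univ \ {b})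
    (hbA : b ∈ A) (haB : a ∉ B) :
    cutRank G (Finset.univ \ {b}) (A ∩ B) + cutRank G (Finset.univ \ {a}) (A ∪ B) ≤
      cutRank G (Finset.univ \ {a}) A + cutRank G (Finset.univ \ {b}) B := by
  unfold cutRank cutRankOn
  have haA : a ∉ A := fun h => by simpa using (hA h)
  have hbB : b ∉ B := fun h => by simpa using (hB h)
  set M : Matrix V V (ZMod 2) :=
    Matrix.of (fun i j => if G.Adj i j then (1 : ZMod 2) else 0) with hM
  have hrk : ∀ X Y : Finset V,
      (Matrix.of (fun (i : ↥X) (j : ↥Y) => if G.Adj i.1 j.1 then (1 : ZMod 2) else 0)).rank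
        = subrk M X Y := by
    intro X Y
    rw [subrk_eq_rank]
    congr 1
  have hY1 : (Finset.univ \ {b}) \ (A ∩ B)
      = ((Finset.univ \ {a}) \ A) ∪ ((Finset.univ \ {b}) \ B) := by
    ext x
    simp only [Finset.mem_sdiff, Finset.mem_union, Finset.mem_inter, Finset.mem_singleton,
      Finset.mem_univ, true_and, not_and]
    constructor
    · rintro ⟨hxb, hx⟩
      by_cases hxA : x ∈ A
      · exact Or.inr ⟨hxb, hx hxA⟩
      · rcases eq_or_ne x a with rfl | hxa
        · exact Or.inr ⟨hxb, haB⟩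
        · exact Or.inl ⟨hxa, hxA⟩
    · rintro (⟨hxa, hxA⟩ | ⟨hxb, hxB⟩)
      · exact ⟨fun h => hxA (h ▸ hbA), fun h => absurd h hxA⟩
      · exact ⟨hxb, fun _ => hxB⟩
  have hY2 : (Finset.univ \ {a}) \ (A ∪ B)
      = ((Finset.univ \ {a}) \ A) ∩ ((Finset.univ \ {b}) \ B) := by
    ext x
    simp only [Finset.mem_sdiff, Finset.mem_inter, Finset.mem_union, Finset.mem_singleton,
      Finset.mem_univ, true_and]
    constructor
    · rintro ⟨hxa, hx⟩
      push_neg at hx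
      exact ⟨⟨hxa, hx.1⟩, ⟨fun h => hx.1 (h ▸ hbA), hx.2⟩⟩
    · rintro ⟨⟨hxa, hxA⟩, ⟨hxb, hxB⟩⟩
      exact ⟨hxa, by push_neg; exact ⟨hxA, hxB⟩⟩
  rw [hrk, hrk, hrk, hrk, hY1, hY2]
  exact subrk_bimodular M A B ((Finset.univ \ {a}) \ A) ((Finset.univ \ {b}) \ B)
end

section
/- Let G be a graph with vertices a ≠ b, and let A ⊆ V(G)−{a}, B ⊆ V(G)−{b}. If b ∈ A and a ∈ B, then ρ_{G∖a∖b}(A∩B) + ρ_G(A∪B) ≤ ρ_{G∖a}(A) + ρ_{G∖b}(B). -/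
open Finset

variable {V : Type} [Fintype V] [DecidableEq V]

open scoped Classical

section CutRankSubmod

open Module Submodule

variable (G : SimpleGraph V)

/-- The adjacency matrix of `G` over `GF(2)`. -/
noncomputable def adjMat2 : V → V → ZMod 2 := fun i j => if G.Adj i j then 1 else 0

/-- Restriction of a vector to the coordinates in `Y`. -/
noncomputable def resL (Y : Finset V) : (V → ZMod 2) →ₗ[ZMod 2] (↥Y → ZMod 2) :=
  LinearMap.funLeft (ZMod 2) (ZMod 2) Subtype.val

/-- Span of the rows of the adjacency matrix indexed by `X`. -/
noncomputable def rowSpan (X : Finset V) : Submodule (ZMod 2) (V → ZMod 2) :=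
  Submodule.span (ZMod 2) (adjMat2 G '' ↑X)

lemma cutRankOn_eq_finrank (X Y : Finset V) :
    cutRankOn G X Y = finrank (ZMod 2) ((rowSpan G X).map (resL Y)) := by
  have hset : Set.range (Matrix.of
        (fun (i : ↥X) (j : ↥Y) => if G.Adj i.1 j.1 then (1 : ZMod 2) else 0)) =
      resL Y '' (adjMat2 G '' ↑X) := by
    ext v
    constructor
    · rintro ⟨i, rfl⟩
      exact ⟨adjMat2 G i.1, ⟨i.1, i.2, rfl⟩, rfl⟩
    · rintro ⟨w, ⟨i, hi, rfl⟩, rfl⟩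
      exact ⟨⟨i, hi⟩, rfl⟩
  rw [cutRankOn, Matrix.rank_eq_finrank_span_row]
  erw [hset]
  rw [Submodule.span_image]
  rfl

set_option synthInstance.maxHeartbeats 1000000 in
lemma finrank_map_add_finrank_ker (p : Submodule (ZMod 2) (V → ZMod 2)) (Y : Finset V) :
    finrank (ZMod 2) (p.map (resL Y)) + finrank (ZMod 2) (LinearMap.ker (resL (V := V) Y)) =
      finrank (ZMod 2) (p ⊔ LinearMap.ker (resL (V := V) Y) : Submodule (ZMod 2) (V → ZMod 2)) := by
  set f := resL (V := V) Y with hf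
  set q : Submodule (ZMod 2) (V → ZMod 2) := p ⊔ LinearMap.ker f with hq
  have hker_le : LinearMap.ker f ≤ q := le_sup_right
  have hmapker : (LinearMap.ker f).map f = ⊥ := by
    ext x
    simp only [Submodule.mem_map, LinearMap.mem_ker, Submodule.mem_bot]
    constructor
    · rintro ⟨y, hy, rfl⟩; exact hy
    · rintro rfl; exact ⟨0, map_zero f, map_zero f⟩
  have hmap : q.map f = p.map f := by
    rw [hq, Submodule.map_sup, hmapker, sup_bot_eq]
  have hrn := LinearMap.finrank_range_add_finrank_ker (f.domRestrict q)
  rw [LinearMap.range_domRestrict, hmap, LinearMap.ker_domRestrict] at hrn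
  have heq : finrank (ZMod 2) (Submodule.comap q.subtype (LinearMap.ker f)) =
      finrank (ZMod 2) (LinearMap.ker f) :=
    (Submodule.comapSubtypeEquivOfLe hker_le).finrank_eq
  rwa [heq] at hrn

lemma mem_ker_resL {Y : Finset V} {v : V → ZMod 2} :
    v ∈ LinearMap.ker (resL (V := V) Y) ↔ ∀ x ∈ Y, v x = 0 := by
  simp only [resL, LinearMap.mem_ker, LinearMap.funLeft_apply, funext_iff]
  constructor
  · intro h x hx; exact h ⟨x, hx⟩
  · intro h j; exact h j.1 j.2

lemma ker_resL_union (Y₁ Y₂ : Finset V) :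
    LinearMap.ker (resL (V := V) (Y₁ ∪ Y₂)) =
      LinearMap.ker (resL (V := V) Y₁) ⊓ LinearMap.ker (resL (V := V) Y₂) := by
  ext v
  simp only [Submodule.mem_inf, mem_ker_resL, Finset.mem_union]
  constructor
  · intro h
    exact ⟨fun x hx => h x (Or.inl hx), fun x hx => h x (Or.inr hx)⟩
  · rintro ⟨h1, h2⟩ x (hx | hx)
    · exact h1 x hx
    · exact h2 x hx

lemma ker_resL_inter (Y₁ Y₂ : Finset V) :
    LinearMap.ker (resL (V := V) (Y₁ ∩ Y₂)) =
      LinearMap.ker (resL (V := V) Y₁) ⊔ LinearMap.ker (resL (V := V) Y₂) := by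
  refine le_antisymm ?_ (sup_le ?_ ?_)
  · intro v hv
    rw [mem_ker_resL] at hv
    rw [Submodule.mem_sup]
    refine ⟨fun x => if x ∈ Y₁ then 0 else v x, ?_, fun x => if x ∈ Y₁ then v x else 0, ?_, ?_⟩
    · rw [mem_ker_resL]; intro x hx; simp [hx]
    · rw [mem_ker_resL]; intro x hx
      by_cases h1 : x ∈ Y₁
      · simp only [if_pos h1]; exact hv x (Finset.mem_inter.mpr ⟨h1, hx⟩)
      · simp [h1]
    · funext x; by_cases h1 : x ∈ Y₁ <;> simp [h1]
  · intro v hv; rw [mem_ker_resL] at hv ⊢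
    exact fun x hx => hv x (Finset.mem_inter.mp hx).1
  · intro v hv; rw [mem_ker_resL] at hv ⊢
    exact fun x hx => hv x (Finset.mem_inter.mp hx).2

lemma rowSpan_mono {X X' : Finset V} (h : X ⊆ X') : rowSpan G X ≤ rowSpan G X' :=
  Submodule.span_mono (Set.image_mono  (by exact_mod_cast h))

lemma rowSpan_union (X X' : Finset V) :
    rowSpan G (X ∪ X') = rowSpan G X ⊔ rowSpan G X' := by
  rw [rowSpan, rowSpan, rowSpan, Finset.coe_union, Set.image_union, Submodule.span_union]

/-- Bi-submodularity of the cut-rank function. -/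
lemma cutRankOn_submod (A B Y₁ Y₂ : Finset V) :
    cutRankOn G (A ∩ B) (Y₁ ∪ Y₂) + cutRankOn G (A ∪ B) (Y₁ ∩ Y₂) ≤
      cutRankOn G A Y₁ + cutRankOn G B Y₂ := by
  have e1 := finrank_map_add_finrank_ker (rowSpan G (A ∩ B)) (Y₁ ∪ Y₂)
  have e2 := finrank_map_add_finrank_ker (rowSpan G (A ∪ B)) (Y₁ ∩ Y₂)
  have e3 := finrank_map_add_finrank_ker (rowSpan G A) Y₁
  have e4 := finrank_map_add_finrank_ker (rowSpan G B) Y₂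
  rw [← cutRankOn_eq_finrank] at e1 e2 e3 e4
  rw [ker_resL_union] at e1
  rw [ker_resL_inter] at e2
  have hK : finrank (ZMod 2) (LinearMap.ker (resL (V := V) (Y₁ ∪ Y₂)))
      + finrank (ZMod 2) (LinearMap.ker (resL (V := V) (Y₁ ∩ Y₂)))
      = finrank (ZMod 2) (LinearMap.ker (resL (V := V) Y₁))
        + finrank (ZMod 2) (LinearMap.ker (resL (V := V) Y₂)) := by
    rw [ker_resL_union, ker_resL_inter, add_comm]
    exact Submodule.finrank_sup_add_finrank_inf_eq _ _
  rw [ker_resL_union, ker_resL_inter] at hK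
  have h1 : rowSpan G (A ∩ B) ⊔ (LinearMap.ker (resL (V := V) Y₁) ⊓ LinearMap.ker (resL (V := V) Y₂))
      ≤ (rowSpan G A ⊔ LinearMap.ker (resL (V := V) Y₁)) ⊓
        (rowSpan G B ⊔ LinearMap.ker (resL (V := V) Y₂)) := by
    refine sup_le (le_inf ?_ ?_) (inf_le_inf le_sup_right le_sup_right)
    · exact le_trans (rowSpan_mono G Finset.inter_subset_left) le_sup_left
    · exact le_trans (rowSpan_mono G Finset.inter_subset_right) le_sup_left
  have h2 : rowSpan G (A ∪ B) ⊔ (LinearMap.ker (resL (V := V) Y₁) ⊔ LinearMap.ker (resL (V := V) Y₂))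
      ≤ (rowSpan G A ⊔ LinearMap.ker (resL (V := V) Y₁)) ⊔
        (rowSpan G B ⊔ LinearMap.ker (resL (V := V) Y₂)) := by
    rw [rowSpan_union]
    refine sup_le (sup_le ?_ ?_) (sup_le ?_ ?_)
    · exact le_trans le_sup_left le_sup_left
    · exact le_trans le_sup_left le_sup_right
    · exact le_trans le_sup_right le_sup_left
    · exact le_trans le_sup_right le_sup_right
  have hsub := Submodule.finrank_sup_add_finrank_inf_eq
    (rowSpan G A ⊔ LinearMap.ker (resL (V := V) Y₁))
    (rowSpan G B ⊔ LinearMap.ker (resL (V := V) Y₂))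
  have hm1 := Submodule.finrank_mono h1
  have hm2 := Submodule.finrank_mono h2
  omega

end CutRankSubmod

theorem cutRank_del_del_inter {G : SimpleGraph V} {a b : V} (hab : a ≠ b)
    {A B : Finset V} (hA : A ⊆ Finset.univ \ {a}) (hB : B ⊆ Finset.univ \ {b})
    (hbA : b ∈ A) (haB : a ∈ B) :
    cutRank G ((Finset.univ \ {a}) \ {b}) (A ∩ B) + cutRank G Finset.univ (A ∪ B) ≤
      cutRank G (Finset.univ \ {a}) A + cutRank G (Finset.univ \ {b}) B := by
  have haA : a ∉ A := fun h => by simpa using hA h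
  have hbB : b ∉ B := fun h => by simpa using hB h
  have hYu : ((Finset.univ \ {a}) \ {b}) \ (A ∩ B) =
      ((Finset.univ \ {a}) \ A) ∪ ((Finset.univ \ {b}) \ B) := by
    ext x
    simp only [Finset.mem_sdiff, Finset.mem_union, Finset.mem_inter, Finset.mem_singleton,
      Finset.mem_univ, true_and, not_and]
    constructor
    · rintro ⟨⟨hxa, hxb⟩, h⟩
      by_cases hxA : x ∈ A
      · exact Or.inr ⟨hxb, h hxA⟩
      · exact Or.inl ⟨hxa, hxA⟩
    · rintro (⟨hxa, hxA⟩ | ⟨hxb, hxB⟩)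
      · exact ⟨⟨hxa, fun e => hxA (e ▸ hbA)⟩, fun h _ => hxA h⟩
      · exact ⟨⟨fun e => hxB (e ▸ haB), hxb⟩, fun _ h => hxB h⟩
  have hYi : Finset.univ \ (A ∪ B) =
      ((Finset.univ \ {a}) \ A) ∩ ((Finset.univ \ {b}) \ B) := by
    ext x
    simp only [Finset.mem_sdiff, Finset.mem_union, Finset.mem_inter, Finset.mem_singleton,
      Finset.mem_univ, true_and, not_or]
    constructor
    · rintro ⟨hxA, hxB⟩
      exact ⟨⟨fun e => hxB (e ▸ haB), hxA⟩, ⟨fun e => hxA (e ▸ hbA), hxB⟩⟩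
    · rintro ⟨⟨_, hxA⟩, ⟨_, hxB⟩⟩
      exact ⟨hxA, hxB⟩
  rw [cutRank, cutRank, cutRank, cutRank, hYu, hYi]
  exact cutRankOn_submod G A B _ _
end

section
/- Let G be a graph, x a vertex of G, and X, Y ⊆ V(G)−{x}. Then ρ_{G∖x}(X∩Y) + ρ_G(X∪Y∪{x}) ≤ ρ_{G∖x}(X) + ρ_G(Y∪{x}). -/
open Finset

variable {V : Type} [Fintype V] [DecidableEq V]

open scoped Classical

set_option synthInstance.maxHeartbeats 400000
set_option maxHeartbeats 1000000
set_option linter.unusedSectionVars false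

namespace CutRankAux

abbrev F2 := ZMod 2

noncomputable def adjMat (G : SimpleGraph V) : Matrix V V F2 :=
  fun i j => if G.Adj i j then 1 else 0

noncomputable def proj (C : Finset V) : (V → F2) →ₗ[F2] (↥C → F2) :=
  LinearMap.funLeft F2 F2 Subtype.val

noncomputable def rowSpan (G : SimpleGraph V) (R : Finset V) : Submodule F2 (V → F2) :=
  Submodule.span F2 (adjMat G '' ↑R)

lemma mem_ker_proj {C : Finset V} {v : V → F2} :
    v ∈ LinearMap.ker (proj C) ↔ ∀ j ∈ C, v j = 0 := by
  simp only [LinearMap.mem_ker, proj, LinearMap.funLeft_apply, funext_iff]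
  constructor
  · intro h j hj; exact h ⟨j, hj⟩
  · intro h j; exact h j.1 j.2

lemma ker_proj_inter (C1 C2 : Finset V) :
    LinearMap.ker (proj (C1 ∪ C2) : (V → F2) →ₗ[F2] _) =
      LinearMap.ker (proj C1) ⊓ LinearMap.ker (proj C2) := by
  ext v
  simp only [Submodule.mem_inf, mem_ker_proj, Finset.mem_union]
  constructor
  · intro h; exact ⟨fun j hj => h j (Or.inl hj), fun j hj => h j (Or.inr hj)⟩
  · rintro ⟨h1, h2⟩ j (hj | hj); exacts [h1 j hj, h2 j hj]

lemma ker_proj_sup (C1 C2 : Finset V) :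
    LinearMap.ker (proj (C1 ∩ C2) : (V → F2) →ₗ[F2] _) =
      LinearMap.ker (proj C1) ⊔ LinearMap.ker (proj C2) := by
  apply le_antisymm
  · intro v hv
    rw [mem_ker_proj] at hv
    refine Submodule.mem_sup.2 ⟨fun j => if j ∈ C1 then 0 else v j, ?_,
      fun j => if j ∈ C1 then v j else 0, ?_, ?_⟩
    · rw [mem_ker_proj]; intro j hj; simp [hj]
    · rw [mem_ker_proj]; intro j hj
      by_cases h1 : j ∈ C1
      · simp [h1, hv j (Finset.mem_inter.2 ⟨h1, hj⟩)]
      · simp [h1]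
    · funext j; by_cases h1 : j ∈ C1 <;> simp [h1]
  · refine sup_le ?_ ?_ <;> intro v hv <;> rw [mem_ker_proj] at hv ⊢ <;>
      intro j hj <;> exact hv j (by simp at hj; tauto)

lemma rowSpan_union (G : SimpleGraph V) (R1 R2 : Finset V) :
    rowSpan G (R1 ∪ R2) = rowSpan G R1 ⊔ rowSpan G R2 := by
  unfold rowSpan
  rw [Finset.coe_union, show adjMat G '' (↑R1 ∪ ↑R2) = adjMat G '' ↑R1 ∪ adjMat G '' ↑R2 from Set.image_union _ _ _, Submodule.span_union]

lemma rowSpan_mono (G : SimpleGraph V) {R1 R2 : Finset V} (h : R1 ⊆ R2) :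
    rowSpan G R1 ≤ rowSpan G R2 :=
  Submodule.span_mono (Set.image_mono (by exact_mod_cast h))

lemma cutRankOn_eq (G : SimpleGraph V) (R C : Finset V) :
    cutRankOn G R C = Module.finrank F2 (Submodule.map (proj C) (rowSpan G R)) := by
  have hset : Set.range (Matrix.of fun (i : ↥R) (j : ↥C) =>
      if G.Adj i.1 j.1 then (1 : F2) else 0).row = ⇑(proj C) '' (adjMat G '' ↑R) := by
    ext w
    constructor
    · rintro ⟨i, rfl⟩
      exact ⟨adjMat G i.1, ⟨i.1, i.2, rfl⟩, rfl⟩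
    · rintro ⟨u, ⟨i, hi, rfl⟩, rfl⟩
      exact ⟨⟨i, hi⟩, rfl⟩
  rw [cutRankOn, Matrix.rank_eq_finrank_span_row, hset, rowSpan, Submodule.span_image]

lemma finrank_map_add_finrank_ker {M : Type} [AddCommGroup M] [Module F2 M]
    (f : (V → F2) →ₗ[F2] M) (p : Submodule F2 (V → F2)) :
    Module.finrank F2 (Submodule.map f p) + Module.finrank F2 (LinearMap.ker f) =
      Module.finrank F2 ↥(p ⊔ LinearMap.ker f) := by
  have hmap : Submodule.map f (p ⊔ LinearMap.ker f) = Submodule.map f p := by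
    rw [Submodule.map_sup]
    simp [Submodule.map_le_iff_le_comap]
  set q := p ⊔ LinearMap.ker f with hq
  have hk : LinearMap.ker f ≤ q := le_sup_right
  have h1 := LinearMap.finrank_range_add_finrank_ker (f.comp q.subtype)
  rw [LinearMap.range_comp, Submodule.range_subtype, hmap, LinearMap.ker_comp] at h1
  have h2 : Module.finrank F2 (LinearMap.ker f) =
      Module.finrank F2 (Submodule.comap q.subtype (LinearMap.ker f)) :=
    ((Submodule.comapSubtypeEquivOfLe hk).finrank_eq).symm
  rw [h2]
  exact h1

lemma rank_submod (G : SimpleGraph V) (R1 R2 C1 C2 : Finset V) :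
    cutRankOn G (R1 ∩ R2) (C1 ∪ C2) + cutRankOn G (R1 ∪ R2) (C1 ∩ C2) ≤
      cutRankOn G R1 C1 + cutRankOn G R2 C2 := by
  simp only [cutRankOn_eq]
  have e1 := finrank_map_add_finrank_ker (proj C1) (rowSpan G R1)
  have e2 := finrank_map_add_finrank_ker (proj C2) (rowSpan G R2)
  have eI := finrank_map_add_finrank_ker (proj (C1 ∪ C2)) (rowSpan G (R1 ∩ R2))
  have eU := finrank_map_add_finrank_ker (proj (C1 ∩ C2)) (rowSpan G (R1 ∪ R2))
  rw [ker_proj_inter] at eI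
  rw [ker_proj_sup] at eU
  have hre : rowSpan G (R1 ∪ R2) ⊔ (LinearMap.ker (proj C1) ⊔ LinearMap.ker (proj C2)) =
      (rowSpan G R1 ⊔ LinearMap.ker (proj C1)) ⊔ (rowSpan G R2 ⊔ LinearMap.ker (proj C2)) := by
    rw [rowSpan_union]
    exact sup_sup_sup_comm _ _ _ _
  rw [hre] at eU
  have modk := Submodule.finrank_sup_add_finrank_inf_eq
    (LinearMap.ker (proj C1 : (V → F2) →ₗ[F2] _)) (LinearMap.ker (proj C2))
  have moda := Submodule.finrank_sup_add_finrank_inf_eq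
    (rowSpan G R1 ⊔ LinearMap.ker (proj C1)) (rowSpan G R2 ⊔ LinearMap.ker (proj C2))
  have hIle : Module.finrank F2
        ↥(rowSpan G (R1 ∩ R2) ⊔ (LinearMap.ker (proj C1) ⊓ LinearMap.ker (proj C2))) ≤
      Module.finrank F2
        ↥((rowSpan G R1 ⊔ LinearMap.ker (proj C1)) ⊓ (rowSpan G R2 ⊔ LinearMap.ker (proj C2))) := by
    apply Submodule.finrank_mono
    apply sup_le
    · exact le_inf ((rowSpan_mono G Finset.inter_subset_left).trans le_sup_left)
        ((rowSpan_mono G Finset.inter_subset_right).trans le_sup_left)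
    · exact le_inf (inf_le_left.trans le_sup_right) (inf_le_right.trans le_sup_right)
  linarith [e1, e2, eI, eU, modk, moda, hIle]

end CutRankAux

theorem cutRank_del_submod_insert {G : SimpleGraph V} {x : V}
    {X Y : Finset V} (hX : X ⊆ Finset.univ \ {x}) (hY : Y ⊆ Finset.univ \ {x}) :
    cutRank G (Finset.univ \ {x}) (X ∩ Y) + cutRank G Finset.univ (X ∪ Y ∪ {x}) ≤
      cutRank G (Finset.univ \ {x}) X + cutRank G Finset.univ (Y ∪ {x}) := by
  have hxX : x ∉ X := fun h => by simpa using hX h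
  have hA : X ∩ (Y ∪ {x}) = X ∩ Y := by
    ext a
    simp only [mem_inter, mem_union, mem_singleton]
    constructor
    · rintro ⟨h1, h2 | rfl⟩
      exacts [⟨h1, h2⟩, absurd h1 hxX]
    · rintro ⟨h1, h2⟩
      exact ⟨h1, Or.inl h2⟩
  have hB : ((univ \ {x}) \ X) ∪ (univ \ (Y ∪ {x})) = (univ \ {x}) \ (X ∩ Y) := by
    ext a
    simp only [mem_union, mem_sdiff, mem_univ, true_and, mem_inter, mem_singleton]
    tauto
  have hD : ((univ \ {x}) \ X) ∩ (univ \ (Y ∪ {x})) = univ \ (X ∪ Y ∪ {x}) := by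
    ext a
    simp only [mem_inter, mem_sdiff, mem_univ, true_and, mem_union, mem_singleton]
    tauto
  have hC : X ∪ (Y ∪ {x}) = X ∪ Y ∪ {x} := (union_assoc X Y {x}).symm
  unfold cutRank
  rw [← hB, ← hA, ← hD, ← hC]
  exact CutRankAux.rank_submod G X (Y ∪ {x}) ((univ \ {x}) \ X) (univ \ (Y ∪ {x}))
end

section
/- Let G be a graph, x a vertex of G, and X, Y ⊆ V(G)−{x}. Then ρ_G(X∩Y) + ρ_{G∖x}(X∪Y) ≤ ρ_{G∖x}(X) + ρ_G(Y). -/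
open Finset

variable {V : Type} [Fintype V] [DecidableEq V]

open scoped Classical

section RankCrossing

variable {F : Type} [Field F]

/-- Vectors supported on `C` and killed by the rows in `R` of `M`. -/
def kerSpaceAux (M : Matrix V V F) (R C : Finset V) : Submodule F (V → F) where
  carrier := {y | (∀ j, j ∉ C → y j = 0) ∧ ∀ i ∈ R, ∑ j, M i j * y j = 0}
  add_mem' := by
    rintro a b ⟨ha1, ha2⟩ ⟨hb1, hb2⟩
    refine ⟨fun j hj => by simp [ha1 j hj, hb1 j hj], fun i hi => ?_⟩
    simp only [Pi.add_apply, mul_add, Finset.sum_add_distrib, ha2 i hi, hb2 i hi, add_zero]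
  zero_mem' := by simp
  smul_mem' := by
    rintro c a ⟨ha1, ha2⟩
    refine ⟨fun j hj => by simp [ha1 j hj], fun i hi => ?_⟩
    have : ∑ j, M i j * (c * a j) = c * ∑ j, M i j * a j := by
      rw [Finset.mul_sum]; exact Finset.sum_congr rfl fun j _ => by ring
    simp only [Pi.smul_apply, smul_eq_mul, this, ha2 i hi, mul_zero]

lemma kerSpaceAux_mono (M : Matrix V V F) {R R' C C' : Finset V}
    (hR : R' ⊆ R) (hC : C ⊆ C') : kerSpaceAux M R C ≤ kerSpaceAux M R' C' := by
  rintro y ⟨h1, h2⟩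
  exact ⟨fun j hj => h1 j (fun h => hj (hC h)), fun i hi => h2 i (hR hi)⟩

lemma kerSpaceAux_inf (M : Matrix V V F) (R1 C1 R2 C2 : Finset V) :
    kerSpaceAux M R1 C1 ⊓ kerSpaceAux M R2 C2 ≤ kerSpaceAux M (R1 ∪ R2) (C1 ∩ C2) := by
  rintro y ⟨⟨h11, h12⟩, ⟨h21, h22⟩⟩
  refine ⟨fun j hj => ?_, fun i hi => ?_⟩
  · rcases Finset.mem_inter.not.mp hj with h
    by_cases h1 : j ∈ C1
    · exact h21 j (fun h2 => h ⟨h1, h2⟩)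
    · exact h11 j h1
  · rcases Finset.mem_union.mp hi with h | h
    · exact h12 i h
    · exact h22 i h

/-- Extension-by-zero as a linear map. -/
def extLin (C : Finset V) : (↥C → F) →ₗ[F] (V → F) where
  toFun y := fun j => if h : j ∈ C then y ⟨j, h⟩ else 0
  map_add' a b := by funext j; by_cases h : j ∈ C <;> simp [h]
  map_smul' c a := by funext j; by_cases h : j ∈ C <;> simp [h]

lemma extLin_injective (C : Finset V) : Function.Injective (extLin (F := F) C) := by
  intro a b hab
  funext j
  have := congrFun hab j.1
  simpa [extLin, j.2] using this

lemma kerSpaceAux_eq_map (M : Matrix V V F) (R C : Finset V) :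
    kerSpaceAux M R C =
      Submodule.map (extLin C)
        (LinearMap.ker (M.submatrix (Subtype.val : ↥R → V)
          (Subtype.val : ↥C → V)).mulVecLin) := by
  have key : ∀ (y : ↥C → F) (i : V),
      ∑ j : ↥C, M i j.1 * y j = ∑ j, M i j * (extLin C y) j := by
    intro y i
    rw [show (∑ j, M i j * (extLin C y) j) = ∑ j ∈ C, M i j * (extLin C y) j from
      (Finset.sum_subset (Finset.subset_univ C) (fun j _ hj => by
        simp [extLin, hj])).symm]
    rw [← Finset.sum_coe_sort C (fun j => M i j * (extLin C y) j)]
    exact Finset.sum_congr rfl fun j _ => by simp [extLin, j.2]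
  ext z
  constructor
  · rintro ⟨h1, h2⟩
    refine ⟨fun j => z j.1, ?_, ?_⟩
    · simp only [SetLike.mem_coe, LinearMap.mem_ker]
      funext i
      have hext : extLin (F := F) C (fun j => z j.1) = z := by
        funext j
        by_cases h : j ∈ C
        · simp [extLin, h]
        · simp [extLin, h, h1 j h]
      simp only [Matrix.mulVecLin_apply, Matrix.mulVec, dotProduct,
        Matrix.submatrix_apply, Pi.zero_apply]
      rw [key (fun j => z j.1) i.1]
      rw [hext]
      exact h2 i.1 i.2
    · funext j
      by_cases h : j ∈ C
      · simp [extLin, h]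
      · simp [extLin, h, h1 j h]
  · rintro ⟨y, hy, rfl⟩
    rw [SetLike.mem_coe, LinearMap.mem_ker] at hy
    refine ⟨fun j hj => by simp [extLin, hj], fun i hi => ?_⟩
    rw [← key y i]
    have := congrFun hy (⟨i, hi⟩ : ↥R)
    simpa [Matrix.mulVec, dotProduct] using this

lemma rank_add_finrank_kerSpaceAux (M : Matrix V V F) (R C : Finset V) :
    (M.submatrix (Subtype.val : ↥R → V) (Subtype.val : ↥C → V)).rank
      + Module.finrank F (kerSpaceAux M R C) = C.card := by
  have h1 := LinearMap.finrank_range_add_finrank_ker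
    (M.submatrix (Subtype.val : ↥R → V) (Subtype.val : ↥C → V)).mulVecLin
  have h2 : Module.finrank F (↥C → F) = C.card := by
    rw [Module.finrank_pi]; exact Fintype.card_coe C
  have h3 : Module.finrank F (kerSpaceAux M R C) =
      Module.finrank F (LinearMap.ker (M.submatrix (Subtype.val : ↥R → V)
        (Subtype.val : ↥C → V)).mulVecLin) := by
    rw [kerSpaceAux_eq_map]
    exact (LinearEquiv.finrank_eq
      (Submodule.equivMapOfInjective _ (extLin_injective C) _)).symm
  rw [Matrix.rank, h3]
  rw [h1] at *
  omega

lemma rank_crossing (M : Matrix V V F) (R1 C1 R2 C2 : Finset V) :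
    (M.submatrix (Subtype.val : ↥(R1 ∩ R2) → V) (Subtype.val : ↥(C1 ∪ C2) → V)).rank
      + (M.submatrix (Subtype.val : ↥(R1 ∪ R2) → V) (Subtype.val : ↥(C1 ∩ C2) → V)).rank
    ≤ (M.submatrix (Subtype.val : ↥R1 → V) (Subtype.val : ↥C1 → V)).rank
      + (M.submatrix (Subtype.val : ↥R2 → V) (Subtype.val : ↥C2 → V)).rank := by
  have e1 := rank_add_finrank_kerSpaceAux M R1 C1
  have e2 := rank_add_finrank_kerSpaceAux M R2 C2
  have eu := rank_add_finrank_kerSpaceAux M (R1 ∩ R2) (C1 ∪ C2)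
  have ei := rank_add_finrank_kerSpaceAux M (R1 ∪ R2) (C1 ∩ C2)
  have hcard : (C1 ∪ C2).card + (C1 ∩ C2).card = C1.card + C2.card :=
    Finset.card_union_add_card_inter C1 C2
  have hsup : Module.finrank F ↥(kerSpaceAux M R1 C1 ⊔ kerSpaceAux M R2 C2)
      ≤ Module.finrank F ↥(kerSpaceAux M (R1 ∩ R2) (C1 ∪ C2)) :=
    Submodule.finrank_mono (sup_le
      (kerSpaceAux_mono M Finset.inter_subset_left Finset.subset_union_left)
      (kerSpaceAux_mono M Finset.inter_subset_right Finset.subset_union_right))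
  have hinf : Module.finrank F ↥(kerSpaceAux M R1 C1 ⊓ kerSpaceAux M R2 C2)
      ≤ Module.finrank F ↥(kerSpaceAux M (R1 ∪ R2) (C1 ∩ C2)) :=
    Submodule.finrank_mono (kerSpaceAux_inf M R1 C1 R2 C2)
  have hsubmod := Submodule.finrank_sup_add_finrank_inf_eq
    (kerSpaceAux M R1 C1) (kerSpaceAux M R2 C2)
  omega

end RankCrossing

theorem cutRank_del_submod {G : SimpleGraph V} {x : V}
    {X Y : Finset V} (hX : X ⊆ Finset.univ \ {x}) (hY : Y ⊆ Finset.univ \ {x}) :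
    cutRank G Finset.univ (X ∩ Y) + cutRank G (Finset.univ \ {x}) (X ∪ Y) ≤
      cutRank G (Finset.univ \ {x}) X + cutRank G Finset.univ Y := by
  have hxX : x ∉ X := fun h => by simpa using hX h
  have hxY : x ∉ Y := fun h => by simpa using hY h
  set M : Matrix V V (ZMod 2) :=
    Matrix.of (fun i j : V => if G.Adj i j then (1 : ZMod 2) else 0) with hM
  have hcr : ∀ A B : Finset V, cutRankOn G A B =
      (M.submatrix (Subtype.val : ↥A → V) (Subtype.val : ↥B → V)).rank := fun A B => rfl
  have E2 : Finset.univ \ (X ∩ Y) = ((Finset.univ \ {x}) \ X) ∪ (Finset.univ \ Y) := by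
    ext a
    by_cases hax : a = x <;> simp [hax, hxX, hxY] <;> tauto
  have E3 : (Finset.univ \ {x}) \ (X ∪ Y) =
      ((Finset.univ \ {x}) \ X) ∩ (Finset.univ \ Y) := by
    ext a; simp; tauto
  unfold cutRank
  rw [hcr, hcr, hcr, hcr, E2, E3]
  exact rank_crossing M X ((Finset.univ \ {x}) \ X) Y (Finset.univ \ Y)
end

section
/- Let k be a positive integer and let G be a graph with at least 2k vertices that is k^{+0}-rank-connected. Then for every vertex v of G, both G and G∖v are (k−1)^{+0}-rank-connected. -/
open Finset

variable {V : Type} [Fintype V] [DecidableEq V]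

open scoped Classical

section AuxRank

noncomputable def colFun (G : SimpleGraph V) (X : Finset V) (v : V) : ↥X → ZMod 2 :=
  fun i => if G.Adj i.1 v then 1 else 0

lemma cutRankOn_eq_finrank_s6 (G : SimpleGraph V) (X Y : Finset V) :
    cutRankOn G X Y =
      Module.finrank (ZMod 2) (Submodule.span (ZMod 2) (colFun G X '' ↑Y)) := by
  rw [cutRankOn, Matrix.rank_eq_finrank_span_cols]
  have hr : Set.range ((Matrix.of fun (i : ↥X) (j : ↥Y) =>
      if G.Adj i.1 j.1 then (1 : ZMod 2) else 0).col) = colFun G X '' ↑Y := by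
    ext f
    constructor
    · rintro ⟨j, rfl⟩
      exact ⟨j.1, j.2, rfl⟩
    · rintro ⟨y, hy, rfl⟩
      exact ⟨⟨y, hy⟩, rfl⟩
  rw [hr]

lemma cutRankOn_comm (G : SimpleGraph V) (X Y : Finset V) :
    cutRankOn G X Y = cutRankOn G Y X := by
  rw [cutRankOn, cutRankOn, ← Matrix.rank_transpose]
  congr 1
  ext i j
  simp only [Matrix.transpose_apply, Matrix.of_apply]
  rw [SimpleGraph.adj_comm]

lemma cutRankOn_mono_right (G : SimpleGraph V) (X : Finset V) {Y Y' : Finset V} (h : Y' ⊆ Y) :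
    cutRankOn G X Y' ≤ cutRankOn G X Y := by
  rw [cutRankOn_eq_finrank_s6, cutRankOn_eq_finrank_s6]
  exact Submodule.finrank_mono (Submodule.span_mono (Set.image_mono (by exact_mod_cast h)))

lemma cutRankOn_insert_right (G : SimpleGraph V) (X Y : Finset V) (u : V) :
    cutRankOn G X (insert u Y) ≤ cutRankOn G X Y + 1 := by
  rw [cutRankOn_eq_finrank_s6, cutRankOn_eq_finrank_s6, Finset.coe_insert, Set.image_insert_eq,
    Submodule.span_insert]
  have h1 : Module.finrank (ZMod 2)
      (Submodule.span (ZMod 2) ({colFun G X u} : Set (↥X → ZMod 2))) ≤ 1 := by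
    by_cases hc : colFun G X u = 0
    · rw [hc, Submodule.span_zero_singleton]
      simp
    · rw [finrank_span_singleton hc]
  calc Module.finrank (ZMod 2) ↥(Submodule.span (ZMod 2) ({colFun G X u} : Set (↥X → ZMod 2)) ⊔
        Submodule.span (ZMod 2) (colFun G X '' ↑Y))
      ≤ Module.finrank (ZMod 2) (Submodule.span (ZMod 2) ({colFun G X u} : Set (↥X → ZMod 2)))
        + Module.finrank (ZMod 2) (Submodule.span (ZMod 2) (colFun G X '' ↑Y)) :=
        Submodule.finrank_add_le_finrank_add_finrank _ _
    _ ≤ _ := by omega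

lemma cutRank_sdiff (G : SimpleGraph V) {S X : Finset V} (hX : X ⊆ S) :
    cutRank G S (S \ X) = cutRank G S X := by
  rw [cutRank, cutRank, Finset.sdiff_sdiff_eq_self hX, cutRankOn_comm]

lemma cutRank_insert_le (G : SimpleGraph V) (X : Finset V) (u : V) :
    cutRank G Finset.univ (insert u X) ≤ cutRank G Finset.univ X + 1 := by
  rw [cutRank, cutRank]
  calc cutRankOn G (insert u X) (Finset.univ \ insert u X)
      ≤ cutRankOn G (insert u X) (Finset.univ \ X) :=
        cutRankOn_mono_right _ _ (Finset.sdiff_subset_sdiff le_rfl (Finset.subset_insert _ _))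
    _ = cutRankOn G (Finset.univ \ X) (insert u X) := cutRankOn_comm _ _ _
    _ ≤ cutRankOn G (Finset.univ \ X) X + 1 := cutRankOn_insert_right _ _ _ _
    _ = cutRankOn G X (Finset.univ \ X) + 1 := by rw [cutRankOn_comm]

lemma cutRank_insert_v_le (G : SimpleGraph V) (v : V) {X : Finset V}
    (hX : X ⊆ Finset.univ \ {v}) :
    cutRank G Finset.univ (insert v X) ≤ cutRank G (Finset.univ \ {v}) X + 1 := by
  have hset : Finset.univ \ insert v X = (Finset.univ \ {v}) \ X := by
    ext x
    simp only [Finset.mem_sdiff, Finset.mem_insert, Finset.mem_singleton, Finset.mem_univ,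
      true_and]
    tauto
  rw [cutRank, cutRank, hset]
  calc cutRankOn G (insert v X) ((Finset.univ \ {v}) \ X)
      = cutRankOn G ((Finset.univ \ {v}) \ X) (insert v X) := cutRankOn_comm _ _ _
    _ ≤ cutRankOn G ((Finset.univ \ {v}) \ X) X + 1 := cutRankOn_insert_right _ _ _ _
    _ = cutRankOn G X ((Finset.univ \ {v}) \ X) + 1 := by rw [cutRankOn_comm]

end AuxRank

theorem rankConn_del {G : SimpleGraph V} {k : ℤ} (hk : 0 < k)
    (hG : RankConn G Finset.univ k 0) (hcard : 2 * k ≤ (Fintype.card V : ℤ)) (v : V) :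
    RankConn G Finset.univ (k - 1) 0 ∧ RankConn G (Finset.univ \ {v}) (k - 1) 0 := by
  have key : ∀ Y : Finset V, (cutRank G Finset.univ Y : ℤ) < k - 1 →
      ((Y.card : ℤ) = k - 1) → False := by
    intro Y hrY hYc
    have hr0 : (0 : ℤ) ≤ (cutRank G Finset.univ Y : ℤ) := Int.ofNat_nonneg _
    have hYle : Y.card ≤ Fintype.card V := Finset.card_le_univ Y
    have hn : (Finset.univ \ Y).card = Fintype.card V - Y.card := by
      rw [Finset.card_sdiff_of_subset (Finset.subset_univ Y), Finset.card_univ]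
    have hpos : 0 < (Finset.univ \ Y).card := by omega
    obtain ⟨u, hu⟩ := Finset.card_pos.mp hpos
    have hu' : u ∉ Y := (Finset.mem_sdiff.mp hu).2
    have hrank' := cutRank_insert_le G Y u
    have hrZ : (cutRank G Finset.univ (insert u Y) : ℤ) < k := by
      push_cast at hrank' ⊢
      linarith
    have hmin := hG (insert u Y) (Finset.subset_univ _) hrZ
    have hc1 : (insert u Y).card = Y.card + 1 := Finset.card_insert_of_notMem hu'
    have hc2 : (Finset.univ \ insert u Y).card = Fintype.card V - (Y.card + 1) := by
      rw [Finset.card_sdiff_of_subset (Finset.subset_univ _), Finset.card_univ, hc1]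
    have hA : (k : ℤ) ≤ ((insert u Y).card : ℤ) := by
      rw [hc1]; push_cast; omega
    have hB : (k : ℤ) ≤ (((Finset.univ \ insert u Y).card : ℤ)) := by
      rw [hc2]; push_cast [Nat.cast_sub (by omega : Y.card + 1 ≤ Fintype.card V)]; omega
    have := le_min hA hB
    linarith
  constructor
  · intro X _ hr
    by_contra hcon
    push_neg at hcon
    rw [le_min_iff] at hcon
    obtain ⟨h1, h2⟩ := hcon
    have hr0 : (0 : ℤ) ≤ (cutRank G Finset.univ X : ℤ) := Int.ofNat_nonneg _
    have hmin := hG X (Finset.subset_univ X) (by linarith)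
    rcases min_lt_iff.mp hmin with hlt | hlt
    · exact key X hr (by omega)
    · refine key (Finset.univ \ X) ?_ (by omega)
      rwa [cutRank_sdiff G (Finset.subset_univ X)]
  · set S := Finset.univ \ {v} with hS
    have key2 : ∀ Y ⊆ S, (cutRank G S Y : ℤ) < k - 1 → (k - 1 ≤ (Y.card : ℤ)) →
        ((S \ Y).card : ℤ) ≤ k - 1 := by
      intro Y hYS hrY hYc
      have hr0 : (0 : ℤ) ≤ (cutRank G S Y : ℤ) := Int.ofNat_nonneg _
      have hv' : v ∉ Y := by
        intro hvY
        have := hYS hvY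
        simp [hS] at this
      have hrank' := cutRank_insert_v_le G v (hS ▸ hYS)
      have hrZ : (cutRank G Finset.univ (insert v Y) : ℤ) < k := by
        push_cast at hrank' ⊢
        linarith
      have hmin := hG (insert v Y) (Finset.subset_univ _) hrZ
      have hset : Finset.univ \ insert v Y = S \ Y := by
        ext x
        simp only [hS, Finset.mem_sdiff, Finset.mem_insert, Finset.mem_singleton,
          Finset.mem_univ, true_and]
        tauto
      rw [hset] at hmin
      have hc1 : (insert v Y).card = Y.card + 1 := Finset.card_insert_of_notMem hv'
      rcases min_lt_iff.mp hmin with hlt | hlt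
      · rw [hc1] at hlt
        push_cast at hlt
        omega
      · linarith
    intro X hXS hr
    by_contra hcon
    push_neg at hcon
    rw [le_min_iff] at hcon
    obtain ⟨h1, h2⟩ := hcon
    simp only [add_zero] at h1 h2
    have hr0 : (0 : ℤ) ≤ (cutRank G S X : ℤ) := Int.ofNat_nonneg _
    have e1 := key2 X hXS hr h1
    have hsd : cutRank G S (S \ X) = cutRank G S X := cutRank_sdiff G hXS
    have e2 := key2 (S \ X) Finset.sdiff_subset (by rwa [hsd]) h2
    rw [Finset.sdiff_sdiff_eq_self hXS] at e2
    have hScard : S.card = Fintype.card V - 1 := by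
      rw [hS, Finset.card_sdiff_of_subset (Finset.subset_univ _), Finset.card_univ, Finset.card_singleton]
    have hsum : (S \ X).card + X.card = S.card := Finset.card_sdiff_add_card_eq_card hXS
    have hV1 : 1 ≤ Fintype.card V := Fintype.card_pos_iff.mpr ⟨v⟩
    omega
end

section
/- Let G be a graph that is k^{+ℓ}-rank-connected and let v be a vertex of G. Then G∖v or G/v is k^{+(2ℓ+k−1)}-rank-connected. -/
open Finset

variable {V : Type} [Fintype V] [DecidableEq V]

open scoped Classical

set_option linter.unusedSectionVars false
set_option maxHeartbeats 1000000
set_option synthInstance.maxHeartbeats 400000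

noncomputable def rkm (M : V → V → ZMod 2) (X Y : Finset V) : ℕ :=
  (Matrix.of fun (i : ↥X) (j : ↥Y) => M i.1 j.1).rank

lemma rkm_eq_finrank (M : V → V → ZMod 2) (X Y : Finset V) :
    rkm M X Y = Module.finrank (ZMod 2)
      (Submodule.span (ZMod 2) (Set.range (fun (j : ↥Y) (i : ↥X) => M i.1 j.1))) :=
  Matrix.rank_eq_finrank_span_cols _

lemma rkm_flip (M : V → V → ZMod 2) (h : ∀ a b, M a b = M b a) (X Y : Finset V) :
    rkm M X Y = rkm M Y X := by
  unfold rkm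
  rw [← Matrix.rank_transpose]
  congr 1
  ext i j
  exact h j i

set_option linter.unusedSectionVars false
set_option maxHeartbeats 1000000
set_option synthInstance.maxHeartbeats 400000

noncomputable def resMap (X : Finset V) : (V → ZMod 2) →ₗ[ZMod 2] (↥X → ZMod 2) :=
  LinearMap.funLeft _ _ (fun i : ↥X => (i : V))

noncomputable def colSp (M : V → V → ZMod 2) (Y : Finset V) :
    Submodule (ZMod 2) (V → ZMod 2) :=
  Submodule.span _ (Set.range (fun (j : ↥Y) (i : V) => M i j.1))

noncomputable def zerSp (X : Finset V) : Submodule (ZMod 2) (V → ZMod 2) :=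
  LinearMap.ker (resMap X)

lemma mem_zerSp {X : Finset V} {f : V → ZMod 2} :
    f ∈ zerSp X ↔ ∀ i ∈ X, f i = 0 := by
  simp only [zerSp, LinearMap.mem_ker, resMap, LinearMap.funLeft_apply]
  constructor
  · intro h i hi
    have := congrFun h ⟨i, hi⟩
    simpa [LinearMap.funLeft] using this
  · intro h
    ext i
    simpa [LinearMap.funLeft] using h i.1 i.2

lemma rkm_eq_map (M : V → V → ZMod 2) (X Y : Finset V) :
    rkm M X Y = Module.finrank (ZMod 2) (Submodule.map (resMap X) (colSp M Y)) := by
  rw [rkm_eq_finrank]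
  have : Submodule.map (resMap X) (colSp M Y)
      = Submodule.span (ZMod 2) (Set.range (fun (j : ↥Y) (i : ↥X) => M i.1 j.1)) := by
    rw [colSp, Submodule.map_span, ← Set.range_comp]
    rfl
  rw [this]

lemma map_resMap_zerSp (X : Finset V) : Submodule.map (resMap X) (zerSp X) = ⊥ := by
  rw [Submodule.eq_bot_iff]
  rintro x ⟨y, hy, rfl⟩
  exact hy

lemma finrank_zerSp (X : Finset V) :
    Module.finrank (ZMod 2) (zerSp X) = (univ \ X).card := by
  have h1 := LinearMap.finrank_range_add_finrank_ker (resMap (V := V) X)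
  have hsurj : Function.Surjective (resMap (V := V) X) :=
    LinearMap.funLeft_surjective_of_injective _ _ _ Subtype.val_injective
  rw [LinearMap.range_eq_top.mpr hsurj, finrank_top] at h1
  have h2 : Module.finrank (ZMod 2) (↥X → ZMod 2) = X.card := by
    rw [Module.finrank_pi]; exact Fintype.card_coe X
  have h3 : Module.finrank (ZMod 2) (V → ZMod 2) = Fintype.card V := Module.finrank_pi _
  have h4 : (univ \ X).card = Fintype.card V - X.card := by
    rw [card_sdiff_of_subset (subset_univ _), card_univ]
  have h5 : X.card ≤ Fintype.card V := by
    rw [← card_univ]; exact card_le_card (subset_univ _)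
  rw [h2, h3] at h1
  show Module.finrank (ZMod 2) (LinearMap.ker (resMap X)) = (univ \ X).card
  omega

lemma finrank_colSp_sup_zerSp (M : V → V → ZMod 2) (X Y : Finset V) :
    Module.finrank (ZMod 2) ↥(colSp M Y ⊔ zerSp X) = rkm M X Y + (univ \ X).card := by
  set W := colSp M Y ⊔ zerSp X with hW
  have hker : zerSp X ≤ W := le_sup_right
  have h1 := LinearMap.finrank_range_add_finrank_ker ((resMap X).comp W.subtype)
  rw [LinearMap.range_comp, Submodule.range_subtype] at h1
  have hmap : Submodule.map (resMap X) W = Submodule.map (resMap X) (colSp M Y) := by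
    rw [hW, Submodule.map_sup, map_resMap_zerSp, sup_bot_eq]
  have hkereq : LinearMap.ker ((resMap X).comp W.subtype)
      = Submodule.comap W.subtype (zerSp X) := by
    rw [LinearMap.ker_comp]; rfl
  have heq : Module.finrank (ZMod 2) (LinearMap.ker ((resMap X).comp W.subtype))
      = Module.finrank (ZMod 2) (zerSp X) := by
    rw [hkereq]
    exact (Submodule.comapSubtypeEquivOfLe hker).finrank_eq
  rw [hmap, heq, finrank_zerSp, ← rkm_eq_map] at h1
  omega

lemma zerSp_antitone {X X' : Finset V} (h : X ⊆ X') : zerSp X' ≤ zerSp X := by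
  intro f hf
  rw [mem_zerSp] at hf ⊢
  exact fun i hi => hf i (h hi)

lemma zerSp_sup (X1 X2 : Finset V) : zerSp X1 ⊔ zerSp X2 = zerSp (X1 ∩ X2) := by
  apply le_antisymm
  · exact sup_le (zerSp_antitone inter_subset_left) (zerSp_antitone inter_subset_right)
  · intro f hf
    rw [mem_zerSp] at hf
    have : f = (fun i => if i ∈ X1 then 0 else f i) + (fun i => if i ∈ X1 then f i else 0) := by
      funext i; by_cases h : i ∈ X1 <;> simp [h]
    rw [this]
    apply Submodule.add_mem
    · apply Submodule.mem_sup_left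
      rw [mem_zerSp]; intro i hi; simp [hi]
    · apply Submodule.mem_sup_right
      rw [mem_zerSp]; intro i hi
      by_cases h : i ∈ X1
      · simp [h, hf i (mem_inter.mpr ⟨h, hi⟩)]
      · simp [h]

lemma colSp_mono (M : V → V → ZMod 2) {Y Y' : Finset V} (h : Y ⊆ Y') :
    colSp M Y ≤ colSp M Y' := by
  apply Submodule.span_mono
  rintro x ⟨j, rfl⟩
  exact ⟨⟨j.1, h j.2⟩, rfl⟩

lemma colSp_sup (M : V → V → ZMod 2) (Y1 Y2 : Finset V) :
    colSp M (Y1 ∪ Y2) = colSp M Y1 ⊔ colSp M Y2 := by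
  apply le_antisymm
  · apply Submodule.span_le.mpr
    rintro x ⟨j, rfl⟩
    rcases mem_union.mp j.2 with h | h
    · exact Submodule.mem_sup_left (Submodule.subset_span ⟨⟨j.1, h⟩, rfl⟩)
    · exact Submodule.mem_sup_right (Submodule.subset_span ⟨⟨j.1, h⟩, rfl⟩)
  · exact sup_le (colSp_mono M subset_union_left) (colSp_mono M subset_union_right)

lemma rkm_bimodular (M : V → V → ZMod 2) (X1 Y1 X2 Y2 : Finset V) :
    rkm M (X1 ∩ X2) (Y1 ∪ Y2) + rkm M (X1 ∪ X2) (Y1 ∩ Y2)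
      ≤ rkm M X1 Y1 + rkm M X2 Y2 := by
  have hsup : colSp M (Y1 ∪ Y2) ⊔ zerSp (X1 ∩ X2)
      = (colSp M Y1 ⊔ zerSp X1) ⊔ (colSp M Y2 ⊔ zerSp X2) := by
    rw [colSp_sup, ← zerSp_sup]
    ac_rfl
  have hinf : colSp M (Y1 ∩ Y2) ⊔ zerSp (X1 ∪ X2)
      ≤ (colSp M Y1 ⊔ zerSp X1) ⊓ (colSp M Y2 ⊔ zerSp X2) := by
    apply le_inf
    · exact sup_le (le_trans (colSp_mono M inter_subset_left) le_sup_left)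
        (le_trans (zerSp_antitone subset_union_left) le_sup_right)
    · exact sup_le (le_trans (colSp_mono M inter_subset_right) le_sup_left)
        (le_trans (zerSp_antitone subset_union_right) le_sup_right)
  have key := Submodule.finrank_sup_add_finrank_inf_eq
    (colSp M Y1 ⊔ zerSp X1) (colSp M Y2 ⊔ zerSp X2)
  rw [← hsup, finrank_colSp_sup_zerSp, finrank_colSp_sup_zerSp,
    finrank_colSp_sup_zerSp] at key
  have h2 : rkm M (X1 ∪ X2) (Y1 ∩ Y2) + (univ \ (X1 ∪ X2)).card
      ≤ Module.finrank (ZMod 2)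
        ↥((colSp M Y1 ⊔ zerSp X1) ⊓ (colSp M Y2 ⊔ zerSp X2)) := by
    rw [← finrank_colSp_sup_zerSp]
    exact Submodule.finrank_mono hinf
  have hc : (univ \ (X1 ∩ X2)).card + (univ \ (X1 ∪ X2)).card
      = (univ \ X1).card + (univ \ X2).card := by
    have h0 := Finset.card_inter_add_card_union X1 X2
    have e1 := Finset.card_sdiff_add_card_eq_card (subset_univ (X1 ∩ X2))
    have e2 := Finset.card_sdiff_add_card_eq_card (subset_univ (X1 ∪ X2))
    have e3 := Finset.card_sdiff_add_card_eq_card (subset_univ X1)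
    have e4 := Finset.card_sdiff_add_card_eq_card (subset_univ X2)
    omega
  linarith

noncomputable def extZero (Y : Finset V) (v : V) :
    (↥Y → ZMod 2) →ₗ[ZMod 2] (↥(insert v Y) → ZMod 2) where
  toFun u := fun b => if h : b.1 ∈ Y then u ⟨b.1, h⟩ else 0
  map_add' := by intro x y; funext b; by_cases h : b.1 ∈ Y <;> simp [h]
  map_smul' := by intro c x; funext b; by_cases h : b.1 ∈ Y <;> simp [h]

lemma pivot_rank_le (A H : V → V → ZMod 2) (hA : ∀ a b, A a b = A b a)
    (hH : ∀ a b, H a b = H b a) (v w : V) (Y1 Y2 : Finset V)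
    (hvY1 : v ∉ Y1) (hvY2 : v ∉ Y2) (hwY2 : w ∉ Y2) (hwY1 : w ∈ Y1)
    (hAvv : A v v = 0) (hAvw : A v w = 1)
    (h1 : ∀ a b, a ≠ v → a ≠ w → b ≠ v → b ≠ w →
      H a b = A a b + A v a * A w b + A w a * A v b)
    (h2 : ∀ b, b ≠ v → b ≠ w → H w b = A v b) :
    rkm A (insert v Y1) (insert v Y2) ≤ rkm H Y1 Y2 + 1 := by
  rw [rkm_flip A hA, rkm_flip H hH, rkm_eq_finrank, rkm_eq_finrank]
  set E := extZero Y2 v with hE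
  set cH : ↥Y1 → (↥Y2 → ZMod 2) := fun j i => H i.1 j.1 with hcH
  set spanH := Submodule.span (ZMod 2) (Set.range cH) with hspanH
  set mw : ↥(insert v Y2) → ZMod 2 := fun b => A b.1 w with hmw
  set T := Submodule.map E spanH ⊔ Submodule.span (ZMod 2) {mw} with hT
  have hEcH : ∀ (a : V) (ha : a ∈ Y1) (b : ↥(insert v Y2)),
      E (cH ⟨a, ha⟩) b = if h : b.1 ∈ Y2 then H b.1 a else 0 := by
    intro a ha b
    by_cases h : b.1 ∈ Y2 <;> simp [hE, extZero, h, hcH]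
  have hHw : ∀ (b : V), b ∈ Y2 → H b w = A b v := by
    intro b hb
    have hbv : b ≠ v := fun h => hvY2 (h ▸ hb)
    have hbw : b ≠ w := fun h => hwY2 (h ▸ hb)
    rw [hH, h2 b hbv hbw, hA]
  have hmemw : E (cH ⟨w, hwY1⟩) ∈ T := by
    apply Submodule.mem_sup_left
    exact Submodule.mem_map_of_mem (Submodule.subset_span ⟨⟨w, hwY1⟩, rfl⟩)
  have claim : Set.range (fun (j : ↥(insert v Y1)) (i : ↥(insert v Y2)) => A i.1 j.1)
      ⊆ (T : Set (↥(insert v Y2) → ZMod 2)) := by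
    rintro x ⟨j, rfl⟩
    show (fun (i : ↥(insert v Y2)) => A i.1 j.1) ∈ (T : Set (↥(insert v Y2) → ZMod 2))
    by_cases hjv : j.1 = v
    · have heq : (fun (i : ↥(insert v Y2)) => A i.1 j.1) = E (cH ⟨w, hwY1⟩) := by
        funext b
        rw [hEcH]
        by_cases hb : b.1 ∈ Y2
        · rw [dif_pos hb, hjv, hHw b.1 hb]
        · have hbv : b.1 = v := by
            rcases mem_insert.mp b.2 with h | h
            · exact h
            · exact absurd h hb
          rw [dif_neg hb, hjv, hbv]
          exact hAvv
      rw [heq]; exact hmemw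
    · have hjY1 : j.1 ∈ Y1 := by
        rcases mem_insert.mp j.2 with h | h
        · exact absurd h hjv
        · exact h
      by_cases hjw : j.1 = w
      · have heq : (fun (i : ↥(insert v Y2)) => A i.1 j.1) = mw := by
          funext b; rw [hjw]
        rw [heq]
        exact Submodule.mem_sup_right (Submodule.subset_span rfl)
      · have key : (fun (i : ↥(insert v Y2)) => A i.1 j.1)
            = E (cH ⟨j.1, hjY1⟩) + A v j.1 • mw + A w j.1 • E (cH ⟨w, hwY1⟩) := by
          funext b
          simp only [Pi.add_apply, Pi.smul_apply, smul_eq_mul]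
          rw [hEcH, hEcH]
          by_cases hb : b.1 ∈ Y2
          · rw [dif_pos hb, dif_pos hb]
            have hbv : b.1 ≠ v := fun h => hvY2 (h ▸ hb)
            have hbw : b.1 ≠ w := fun h => hwY2 (h ▸ hb)
            have hmb : mw b = A w b.1 := hA b.1 w
            rw [hmb, h1 b.1 j.1 hbv hbw hjv hjw, hHw b.1 hb, hA b.1 v]
            generalize A b.1 j.1 = p
            generalize A v b.1 = q
            generalize A w j.1 = r
            generalize A w b.1 = s
            generalize A v j.1 = t
            revert p q r s t
            decide
          · have hbv : b.1 = v := by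
              rcases mem_insert.mp b.2 with h | h
              · exact h
              · exact absurd h hb
            rw [dif_neg hb, dif_neg hb]
            have hmb : mw b = A b.1 w := rfl
            rw [hmb, hbv, hAvw, hA v j.1]
            ring
        rw [key]
        apply Submodule.add_mem
        apply Submodule.add_mem
        · exact Submodule.mem_sup_left
            (Submodule.mem_map_of_mem (Submodule.subset_span ⟨⟨j.1, hjY1⟩, rfl⟩))
        · exact Submodule.smul_mem _ _
            (Submodule.mem_sup_right (Submodule.subset_span rfl))
        · exact Submodule.smul_mem _ _ hmemw
  have hle : Submodule.span (ZMod 2)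
      (Set.range (fun (j : ↥(insert v Y1)) (i : ↥(insert v Y2)) => A i.1 j.1)) ≤ T :=
    Submodule.span_le.mpr claim
  calc Module.finrank (ZMod 2) ↥(Submodule.span (ZMod 2)
        (Set.range (fun (j : ↥(insert v Y1)) (i : ↥(insert v Y2)) => A i.1 j.1)))
      ≤ Module.finrank (ZMod 2) ↥T := Submodule.finrank_mono hle
    _ ≤ Module.finrank (ZMod 2) ↥(Submodule.map E spanH)
        + Module.finrank (ZMod 2) ↥(Submodule.span (ZMod 2) ({mw} : Set _)) := by
        have h := Submodule.finrank_sup_add_finrank_inf_eq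
          (Submodule.map E spanH) (Submodule.span (ZMod 2) ({mw} : Set _))
        rw [hT]
        omega
    _ ≤ Module.finrank (ZMod 2) ↥spanH + 1 := by
        have hm := Submodule.finrank_map_le E spanH
        have hs : Module.finrank (ZMod 2)
            ↥(Submodule.span (ZMod 2) ({mw} : Set _)) ≤ 1 := by
          by_cases hmw0 : mw = 0
          · rw [hmw0, Submodule.span_zero_singleton]
            simp
          · rw [finrank_span_singleton hmw0]
        omega


noncomputable def adjm (G : SimpleGraph V) : V → V → ZMod 2 :=
  fun i j => if G.Adj i j then 1 else 0

lemma cutRankOn_eq_rkm (G : SimpleGraph V) (X Y : Finset V) :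
    cutRankOn G X Y = rkm (adjm G) X Y := rfl

lemma adjm_symm (G : SimpleGraph V) : ∀ a b, adjm G a b = adjm G b a := by
  intro a b
  unfold adjm
  rw [SimpleGraph.adj_comm]

lemma adjm_diag (G : SimpleGraph V) (a : V) : adjm G a a = 0 := by
  simp [adjm]

lemma ind_xor (p q : Prop) [Decidable p] [Decidable q] :
    (if Xor' p q then (1 : ZMod 2) else 0)
      = (if p then 1 else 0) + (if q then 1 else 0) := by
  by_cases hp : p <;> by_cases hq : q <;> simp [Xor', hp, hq] <;> decide

lemma ind_toggle (G : SimpleGraph V) (v w a b : V)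
    (hav : a ≠ v) (haw : a ≠ w) (hbv : b ≠ v) (hbw : b ≠ w) :
    (if PivotToggle G v w a b then (1 : ZMod 2) else 0)
      = adjm G v a * adjm G w b + adjm G w a * adjm G v b := by
  unfold PivotToggle SideA SideB SideC adjm
  by_cases h1 : G.Adj v a <;> by_cases h2 : G.Adj w a <;>
    by_cases h3 : G.Adj v b <;> by_cases h4 : G.Adj w b <;>
    simp [h1, h2, h3, h4, hav, haw, hbv, hbw] <;> decide

lemma toggle_v (G : SimpleGraph V) (v w b : V) : ¬ PivotToggle G v w v b := by
  unfold PivotToggle SideA SideB SideC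
  simp

lemma adjm_pivot_w (G : SimpleGraph V) (v w b : V) (hvw : v ≠ w)
    (hbv : b ≠ v) (hbw : b ≠ w) :
    adjm (pivot G v w) w b = adjm G v b := by
  unfold adjm pivot
  simp only [SimpleGraph.Adj]
  have hwb : w ≠ b := fun h => hbw h.symm
  simp only [Equiv.swap_apply_right, Equiv.swap_apply_of_ne_of_ne hbv hbw]
  simp [hwb, toggle_v, Xor']
  by_cases h : G.Adj v b <;> simp [h, Xor]

lemma adjm_pivot (G : SimpleGraph V) (v w a b : V)
    (hav : a ≠ v) (haw : a ≠ w) (hbv : b ≠ v) (hbw : b ≠ w) :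
    adjm (pivot G v w) a b
      = adjm G a b + adjm G v a * adjm G w b + adjm G w a * adjm G v b := by
  by_cases hab : a = b
  · subst hab
    rw [adjm_diag, adjm_diag]
    generalize adjm G v a = p
    generalize adjm G w a = q
    revert p q
    decide
  · have e1 : adjm (pivot G v w) a b
        = (if Xor' (G.Adj a b) (PivotToggle G v w a b) then (1 : ZMod 2) else 0) := by
      unfold adjm pivot
      simp only [SimpleGraph.Adj]
      simp only [Equiv.swap_apply_of_ne_of_ne hav haw,
        Equiv.swap_apply_of_ne_of_ne hbv hbw]
      simp [hab]
    rw [e1, ind_xor, ind_toggle G v w a b hav haw hbv hbw]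
    rw [add_assoc]
    rfl

lemma rkm_insert_zero_col (M : V → V → ZMod 2) (X Y : Finset V) (v : V)
    (hv : v ∉ Y) (h0 : ∀ i, M i v = 0) :
    rkm M X (insert v Y) = rkm M X Y := by
  rw [rkm_eq_finrank, rkm_eq_finrank]
  have hset : Set.range (fun (j : ↥(insert v Y)) (i : ↥X) => M i.1 j.1)
      = insert 0 (Set.range (fun (j : ↥Y) (i : ↥X) => M i.1 j.1)) := by
    ext f
    constructor
    · rintro ⟨j, rfl⟩
      rcases mem_insert.mp j.2 with h | h
      · left
        funext i
        have h2 := h0 i.1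
        rw [← h] at h2
        exact h2
      · right
        exact ⟨⟨j.1, h⟩, rfl⟩
    · rintro (h | ⟨j, rfl⟩)
      · refine ⟨⟨v, mem_insert_self v Y⟩, ?_⟩
        rw [h]
        funext i
        exact h0 i.1
      · exact ⟨⟨j.1, mem_insert_of_mem j.2⟩, rfl⟩
  rw [hset, Submodule.span_insert_zero]

lemma key_ineq (G : SimpleGraph V) (v w : V) (hvw : G.Adj v w)
    (X1 Y1 : Finset V) (hX1 : X1 ⊆ univ \ {v}) (hY1 : Y1 ⊆ univ \ {v}) :
    cutRank G univ (X1 ∩ Y1)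
      + cutRank G univ (((univ \ {v}) \ X1) ∩ ((univ \ {v}) \ Y1))
    ≤ cutRank G (univ \ {v}) X1 + cutRank (pivot G v w) (univ \ {v}) Y1 + 1 := by
  set S : Finset V := univ \ {v} with hS
  set X2 : Finset V := S \ X1 with hX2
  set Y2 : Finset V := S \ Y1 with hY2
  set A := adjm G with hA
  set HH := adjm (pivot G v w) with hHH
  have hvne : v ≠ w := SimpleGraph.Adj.ne hvw
  have hwS : w ∈ S := by simp [hS, Ne.symm hvne]
  have hvS : v ∉ S := by simp [hS]
  have hvX1 : v ∉ X1 := fun h => hvS (hX1 h)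
  have hvY1 : v ∉ Y1 := fun h => hvS (hY1 h)
  have hvX2 : v ∉ X2 := by simp [hX2, hS]
  have hvY2 : v ∉ Y2 := by simp [hY2, hS]
  have hAvw : A v w = 1 := by simp [hA, adjm, hvw]
  -- pivot inequality
  have hpiv : rkm A (insert v Y1) (insert v Y2) ≤ rkm HH Y1 Y2 + 1 := by
    by_cases hw : w ∈ Y1
    · exact pivot_rank_le A HH (adjm_symm G) (adjm_symm _) v w Y1 Y2 hvY1 hvY2
        (fun h => (mem_sdiff.mp h).2 hw) hw (adjm_diag G v) hAvw
        (fun a b hav haw hbv hbw => adjm_pivot G v w a b hav haw hbv hbw)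
        (fun b hbv hbw => adjm_pivot_w G v w b hvne hbv hbw)
    · have hwY2 : w ∈ Y2 := by
        rw [hY2]; exact mem_sdiff.mpr ⟨hwS, hw⟩
      have h1 := pivot_rank_le A HH (adjm_symm G) (adjm_symm _) v w Y2 Y1 hvY2 hvY1
        hw hwY2 (adjm_diag G v) hAvw
        (fun a b hav haw hbv hbw => adjm_pivot G v w a b hav haw hbv hbw)
        (fun b hbv hbw => adjm_pivot_w G v w b hvne hbv hbw)
      rw [rkm_flip A (adjm_symm G) (insert v Y1), rkm_flip HH (adjm_symm _) Y1]
      exact h1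
  -- bimodularity
  have hbi := rkm_bimodular A X1 X2 (insert v Y1) (insert v Y2)
  have e1 : X1 ∩ insert v Y1 = X1 ∩ Y1 := by
    ext x
    simp only [mem_inter, mem_insert]
    constructor
    · rintro ⟨h1, h2 | h2⟩
      · exact absurd (h2 ▸ h1) hvX1
      · exact ⟨h1, h2⟩
    · rintro ⟨h1, h2⟩; exact ⟨h1, Or.inr h2⟩
  have e2 : X2 ∪ insert v Y2 = univ \ (X1 ∩ Y1) := by
    ext x
    by_cases hxv : x = v
    · subst hxv
      simp [hvX1]
    · simp only [mem_union, mem_insert, mem_sdiff, mem_inter, mem_univ, true_and,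
        hX2, hY2, hS, mem_singleton, hxv]
      tauto
  have e3 : X1 ∪ insert v Y1 = univ \ (X2 ∩ Y2) := by
    ext x
    by_cases hxv : x = v
    · subst hxv
      simp [hvX2]
    · simp only [mem_union, mem_insert, mem_sdiff, mem_inter, mem_univ, true_and,
        hX2, hY2, hS, mem_singleton, hxv]
      tauto
  have e4 : X2 ∩ insert v Y2 = X2 ∩ Y2 := by
    ext x
    simp only [mem_inter, mem_insert]
    constructor
    · rintro ⟨h1, h2 | h2⟩
      · exact absurd (h2 ▸ h1) hvX2
      · exact ⟨h1, h2⟩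
    · rintro ⟨h1, h2⟩; exact ⟨h1, Or.inr h2⟩
  rw [e1, e2, e3, e4] at hbi
  -- identify the cut ranks
  have c1 : cutRank G univ (X1 ∩ Y1) = rkm A (X1 ∩ Y1) (univ \ (X1 ∩ Y1)) := rfl
  have c2 : cutRank G univ (X2 ∩ Y2) = rkm A (univ \ (X2 ∩ Y2)) (X2 ∩ Y2) := by
    rw [cutRank, cutRankOn_eq_rkm, ← hA, rkm_flip A (adjm_symm G)]
  have c3 : cutRank G S X1 = rkm A X1 X2 := rfl
  have c4 : cutRank (pivot G v w) S Y1 = rkm HH Y1 Y2 := rfl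
  rw [c3, c4]
  have : cutRank G univ (X2 ∩ Y2) = rkm A (univ \ (X2 ∩ Y2)) (X2 ∩ Y2) := c2
  rw [c1, this]
  omega


theorem rankConn_del_or_contract {G : SimpleGraph V} {k l : ℤ}
    (hG : RankConn G Finset.univ k l) (v : V) :
    RankConn G (Finset.univ \ {v}) k (2 * l + k - 1) ∨
      ∃ w, G.Adj v w ∧ RankConn (pivot G v w) (Finset.univ \ {v}) k (2 * l + k - 1) := by
  by_cases hdel : RankConn G (Finset.univ \ {v}) k (2 * l + k - 1)
  · exact Or.inl hdel
  right
  rw [RankConn] at hdel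
  push_neg at hdel
  obtain ⟨X1, hX1S, hX1rk, hX1min⟩ := hdel
  obtain ⟨hX1c, hX2c⟩ := le_min_iff.mp hX1min
  have hvX1 : v ∉ X1 := fun h => by simpa using hX1S h
  have hX1nn : (0 : ℤ) ≤ (X1.card : ℤ) := Int.natCast_nonneg _
  -- v has a neighbour
  have hex : ∃ w, G.Adj v w := by
    by_contra hno
    push_neg at hno
    have hcol : ∀ i, adjm G i v = 0 := by
      intro i
      have : ¬ G.Adj i v := fun h => hno i h.symm
      simp [adjm, this]
    have hins : univ \ X1 = insert v ((univ \ {v}) \ X1) := by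
      ext x
      by_cases hxv : x = v
      · subst hxv; simp [hvX1]
      · simp [hxv]
    have hvnot : v ∉ (univ \ {v}) \ X1 := by simp
    have heq : cutRank G univ X1 = cutRank G (univ \ {v}) X1 := by
      rw [cutRank, cutRank, cutRankOn_eq_rkm, cutRankOn_eq_rkm, hins,
        rkm_insert_zero_col _ _ _ v hvnot hcol]
    have hmin := hG X1 (subset_univ _) (by rw [heq]; exact hX1rk)
    have hcard : ((univ \ X1).card : ℤ) = (((univ \ {v}) \ X1).card : ℤ) + 1 := by
      rw [hins, card_insert_of_notMem hvnot]
      push_cast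
      ring
    rcases min_lt_iff.mp hmin with h | h
    · omega
    · omega
  obtain ⟨w, hvw⟩ := hex
  refine ⟨w, hvw, ?_⟩
  by_contra hcon
  rw [RankConn] at hcon
  push_neg at hcon
  obtain ⟨Y1, hY1S, hY1rk, hY1min⟩ := hcon
  obtain ⟨hY1c, hY2c⟩ := le_min_iff.mp hY1min
  have hsd : (univ \ {v}) \ ((univ \ {v}) \ Y1) = Y1 := Finset.sdiff_sdiff_eq_self hY1S
  have hY2rk : (cutRank (pivot G v w) (univ \ {v}) ((univ \ {v}) \ Y1) : ℤ) < k := by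
    have e : cutRank (pivot G v w) (univ \ {v}) ((univ \ {v}) \ Y1)
        = cutRank (pivot G v w) (univ \ {v}) Y1 := by
      rw [cutRank, cutRank, cutRankOn_eq_rkm, cutRankOn_eq_rkm, hsd,
        rkm_flip _ (adjm_symm _)]
    rw [e]
    exact hY1rk
  have key1 := key_ineq G v w hvw X1 Y1 hX1S hY1S
  have key2 := key_ineq G v w hvw X1 ((univ \ {v}) \ Y1) hX1S sdiff_subset
  rw [hsd] at key2
  -- smallness helper
  have small : ∀ Z B : Finset V, (cutRank G univ Z : ℤ) < k → Disjoint Z B →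
      (k + (2 * l + k - 1) : ℤ) ≤ (B.card : ℤ) →
      (Z.card : ℤ) ≤ k + l - 1 := by
    intro Z B hZ hd hB
    have hmin := hG Z (subset_univ _) hZ
    have hBsub : B ⊆ univ \ Z := fun x hx =>
      mem_sdiff.mpr ⟨mem_univ x, fun hz => Finset.disjoint_left.mp hd hz hx⟩
    have hcard : (B.card : ℤ) ≤ ((univ \ Z).card : ℤ) := by
      exact_mod_cast card_le_card hBsub
    have hZnn : (0 : ℤ) ≤ (Z.card : ℤ) := Int.natCast_nonneg _
    rcases min_lt_iff.mp hmin with h | h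
    · omega
    · omega
  -- disjointness facts
  have d1 : Disjoint (X1 ∩ Y1) ((univ \ {v}) \ X1) :=
    Finset.disjoint_left.mpr (fun x hx hx2 => (mem_sdiff.mp hx2).2 (mem_inter.mp hx).1)
  have d2 : Disjoint (X1 ∩ ((univ \ {v}) \ Y1)) ((univ \ {v}) \ X1) :=
    Finset.disjoint_left.mpr (fun x hx hx2 => (mem_sdiff.mp hx2).2 (mem_inter.mp hx).1)
  have d3 : Disjoint (((univ \ {v}) \ X1) ∩ Y1) X1 :=
    Finset.disjoint_left.mpr (fun x hx hx2 => (mem_sdiff.mp (mem_inter.mp hx).1).2 hx2)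
  have d4 : Disjoint (((univ \ {v}) \ X1) ∩ ((univ \ {v}) \ Y1)) X1 :=
    Finset.disjoint_left.mpr (fun x hx hx2 => (mem_sdiff.mp (mem_inter.mp hx).1).2 hx2)
  -- card partitions
  have hpart : ∀ T : Finset V, T ⊆ univ \ {v} →
      T.card = (T ∩ Y1).card + (T ∩ ((univ \ {v}) \ Y1)).card := by
    intro T hT
    have hu : (T ∩ Y1) ∪ (T ∩ ((univ \ {v}) \ Y1)) = T := by
      ext x
      constructor
      · intro hx
        rcases mem_union.mp hx with h | h
        · exact (mem_inter.mp h).1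
        · exact (mem_inter.mp h).1
      · intro hx
        by_cases hy : x ∈ Y1
        · exact mem_union_left _ (mem_inter.mpr ⟨hx, hy⟩)
        · exact mem_union_right _ (mem_inter.mpr ⟨hx, mem_sdiff.mpr ⟨hT hx, hy⟩⟩)
    have hd : Disjoint (T ∩ Y1) (T ∩ ((univ \ {v}) \ Y1)) :=
      Finset.disjoint_left.mpr (fun x hx hx2 =>
        (mem_sdiff.mp (mem_inter.mp hx2).2).2 (mem_inter.mp hx).2)
    rw [← card_union_of_disjoint hd, hu]
  have cX1 := hpart X1 hX1S
  have cX2 := hpart ((univ \ {v}) \ X1) sdiff_subset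
  -- Y1 partition by X1 / X2
  have hpartY : ∀ T : Finset V, T ⊆ univ \ {v} →
      T.card = (X1 ∩ T).card + (((univ \ {v}) \ X1) ∩ T).card := by
    intro T hT
    have hu : (X1 ∩ T) ∪ (((univ \ {v}) \ X1) ∩ T) = T := by
      ext x
      constructor
      · intro hx
        rcases mem_union.mp hx with h | h
        · exact (mem_inter.mp h).2
        · exact (mem_inter.mp h).2
      · intro hx
        by_cases hy : x ∈ X1
        · exact mem_union_left _ (mem_inter.mpr ⟨hy, hx⟩)
        · exact mem_union_right _ (mem_inter.mpr ⟨mem_sdiff.mpr ⟨hT hx, hy⟩, hx⟩)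
    have hd : Disjoint (X1 ∩ T) (((univ \ {v}) \ X1) ∩ T) :=
      Finset.disjoint_left.mpr (fun x hx hx2 =>
        (mem_sdiff.mp (mem_inter.mp hx2).1).2 (mem_inter.mp hx).1)
    rw [← card_union_of_disjoint hd, hu]
  have cY1 := hpartY Y1 hY1S
  have cY2 := hpartY ((univ \ {v}) \ Y1) sdiff_subset
  -- one of each pair is small
  have pair1 : (cutRank G univ (X1 ∩ Y1) : ℤ) < k ∨
      (cutRank G univ (((univ \ {v}) \ X1) ∩ ((univ \ {v}) \ Y1)) : ℤ) < k := by
    omega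
  have pair2 : (cutRank G univ (X1 ∩ ((univ \ {v}) \ Y1)) : ℤ) < k ∨
      (cutRank G univ (((univ \ {v}) \ X1) ∩ Y1) : ℤ) < k := by
    omega
  rcases pair1 with p1 | p1 <;> rcases pair2 with p2 | p2
  · have s1 := small _ _ p1 d1 hX2c
    have s2 := small _ _ p2 d2 hX2c
    omega
  · have s1 := small _ _ p1 d1 hX2c
    have s2 := small _ _ p2 d3 hX1c
    omega
  · have s1 := small _ _ p1 d4 hX1c
    have s2 := small _ _ p2 d2 hX2c
    omega
  · have s1 := small _ _ p1 d4 hX1c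
    have s2 := small _ _ p2 d3 hX1c
    omega
end

section
/- Let G be a graph and v a vertex of G with at least one neighbor w. For any partitions (X1,X2) and (Y1,Y2) of V(G)−{v}, ρ_{G∖v}(X1) + ρ_{(G∧vw)∖v}(Y1) ≥ ρ_G(X1∩Y1) + ρ_G(X2∩Y2) − 1. -/
open Finset

variable {V : Type} [Fintype V] [DecidableEq V]

open scoped Classical

-- AUX START
section BixbyAux

open Matrix Module Submodule

variable {V : Type} [Fintype V] [DecidableEq V]

open scoped Classical

set_option linter.unusedSectionVars false

/-- The submatrix of `A` with rows `X` and columns `Y`. -/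
private noncomputable abbrev subMat (A : Matrix V V (ZMod 2)) (X Y : Finset V) :
    Matrix ↥X ↥Y (ZMod 2) :=
  A.submatrix (fun i => (i : V)) (fun j => (j : V))

private noncomputable def colSpan (A : Matrix V V (ZMod 2)) (C : Finset V) :
    Submodule (ZMod 2) (V → ZMod 2) :=
  Submodule.span (ZMod 2) (Set.range fun c : ↥C => fun x => A x c)

private noncomputable def prR (R : Finset V) : (V → ZMod 2) →ₗ[ZMod 2] (↥R → ZMod 2) :=
  LinearMap.funLeft (ZMod 2) (ZMod 2) (fun r => (r : V))

private lemma rank_subMat_eq (A : Matrix V V (ZMod 2)) (R C : Finset V) :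
    (subMat A R C).rank = finrank (ZMod 2) ((colSpan A C).map (prR R)) := by
  have hsp : span (ZMod 2) (Set.range (subMat A R C)ᵀ) = (colSpan A C).map (prR R) := by
    rw [colSpan, Submodule.map_span, ← Set.range_comp]
    rfl
  rw [Matrix.rank, Matrix.range_mulVecLin, ← hsp]
  rfl

private lemma finrank_map_add_finrank_inf_ker {M N : Type} [AddCommGroup M]
    [Module (ZMod 2) M] [AddCommGroup N] [Module (ZMod 2) N] [FiniteDimensional (ZMod 2) M]
    (f : M →ₗ[ZMod 2] N) (p : Submodule (ZMod 2) M) :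
    finrank (ZMod 2) (p.map f) + finrank (ZMod 2) (p ⊓ LinearMap.ker f : Submodule (ZMod 2) M)
      = finrank (ZMod 2) p := by
  have h := LinearMap.finrank_range_add_finrank_ker (f.domRestrict p)
  rw [LinearMap.range_domRestrict] at h
  have hker : LinearMap.ker (f.domRestrict p) =
      Submodule.comap p.subtype (p ⊓ LinearMap.ker f) := by
    ext x
    simp [LinearMap.mem_ker, LinearMap.domRestrict_apply, x.2]
  rw [hker] at h
  have e := (Submodule.comapSubtypeEquivOfLe
    (inf_le_left : p ⊓ LinearMap.ker f ≤ p)).finrank_eq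
  rw [e] at h
  exact h

private lemma mem_ker_prR {R : Finset V} {x : V → ZMod 2} :
    x ∈ LinearMap.ker (prR R) ↔ ∀ r ∈ R, x r = 0 := by
  simp only [LinearMap.mem_ker, prR, LinearMap.funLeft_apply, funext_iff]
  constructor
  · intro h r hr; exact h ⟨r, hr⟩
  · intro h r; exact h r r.2

private lemma ker_prR_inter (R1 R2 : Finset V) :
    LinearMap.ker (prR (V := V) (R1 ∩ R2)) = LinearMap.ker (prR R1) ⊔ LinearMap.ker (prR R2) := by
  apply le_antisymm
  · intro x hx
    rw [mem_ker_prR] at hx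
    rw [Submodule.mem_sup]
    refine ⟨fun u => if u ∈ R1 then 0 else x u, ?_, fun u => if u ∈ R1 then x u else 0, ?_, ?_⟩
    · rw [mem_ker_prR]; intro r hr; simp [hr]
    · rw [mem_ker_prR]; intro r hr
      by_cases h1 : r ∈ R1
      · simp only [h1, if_pos]; exact hx r (Finset.mem_inter.2 ⟨h1, hr⟩)
      · simp [h1]
    · funext u; by_cases h1 : u ∈ R1 <;> simp [h1]
  · apply sup_le <;> intro x hx <;> rw [mem_ker_prR] at hx ⊢ <;>
      intro r hr <;> exact hx r (by simp only [Finset.mem_inter] at hr; tauto)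

private lemma ker_prR_union (R1 R2 : Finset V) :
    LinearMap.ker (prR (V := V) (R1 ∪ R2)) = LinearMap.ker (prR R1) ⊓ LinearMap.ker (prR R2) := by
  ext x
  simp only [Submodule.mem_inf, mem_ker_prR, Finset.mem_union]
  constructor
  · intro h; exact ⟨fun r hr => h r (Or.inl hr), fun r hr => h r (Or.inr hr)⟩
  · rintro ⟨h1, h2⟩ r (hr | hr); exacts [h1 r hr, h2 r hr]

private lemma colSpan_union (A : Matrix V V (ZMod 2)) (C1 C2 : Finset V) :
    colSpan A (C1 ∪ C2) = colSpan A C1 ⊔ colSpan A C2 := by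
  rw [colSpan, colSpan, colSpan, ← Submodule.span_union]
  congr 1
  ext f
  simp only [Set.mem_range, Set.mem_union]
  constructor
  · rintro ⟨⟨c, hc⟩, rfl⟩
    rcases Finset.mem_union.1 hc with h | h
    exacts [Or.inl ⟨⟨c, h⟩, rfl⟩, Or.inr ⟨⟨c, h⟩, rfl⟩]
  · rintro (⟨⟨c, hc⟩, rfl⟩ | ⟨⟨c, hc⟩, rfl⟩)
    exacts [⟨⟨c, Finset.mem_union_left _ hc⟩, rfl⟩, ⟨⟨c, Finset.mem_union_right _ hc⟩, rfl⟩]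

private lemma colSpan_mono (A : Matrix V V (ZMod 2)) {C1 C2 : Finset V} (h : C1 ⊆ C2) :
    colSpan A C1 ≤ colSpan A C2 := by
  apply Submodule.span_le.2
  rintro f ⟨⟨c, hc⟩, rfl⟩
  exact Submodule.subset_span ⟨⟨c, h hc⟩, rfl⟩

private lemma subMat_submodular (A : Matrix V V (ZMod 2)) (R1 C1 R2 C2 : Finset V) :
    (subMat A (R1 ∩ R2) (C1 ∪ C2)).rank + (subMat A (R1 ∪ R2) (C1 ∩ C2)).rank ≤
      (subMat A R1 C1).rank + (subMat A R2 C2).rank := by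
  rw [rank_subMat_eq, rank_subMat_eq, rank_subMat_eq, rank_subMat_eq, colSpan_union]
  have h1 := finrank_map_add_finrank_inf_ker (prR (V := V) R1) (colSpan A C1)
  have h2 := finrank_map_add_finrank_inf_ker (prR (V := V) R2) (colSpan A C2)
  have hsum := Submodule.finrank_sup_add_finrank_inf_eq (colSpan A C1) (colSpan A C2)
  have hUsum := Submodule.finrank_sup_add_finrank_inf_eq
    (colSpan A C1 ⊓ LinearMap.ker (prR (V := V) R1))
    (colSpan A C2 ⊓ LinearMap.ker (prR (V := V) R2))
  have hb1 := finrank_map_add_finrank_inf_ker (prR (V := V) (R1 ∩ R2))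
    (colSpan A C1 ⊔ colSpan A C2)
  rw [ker_prR_inter] at hb1
  have hb1' : finrank (ZMod 2)
      ↥((colSpan A C1 ⊓ LinearMap.ker (prR (V := V) R1)) ⊔
        (colSpan A C2 ⊓ LinearMap.ker (prR (V := V) R2))) ≤
      finrank (ZMod 2) ↥((colSpan A C1 ⊔ colSpan A C2) ⊓
        (LinearMap.ker (prR (V := V) R1) ⊔ LinearMap.ker (prR (V := V) R2))) := by
    apply Submodule.finrank_mono
    apply sup_le
    · exact le_inf (inf_le_left.trans le_sup_left) (inf_le_right.trans le_sup_left)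
    · exact le_inf (inf_le_left.trans le_sup_right) (inf_le_right.trans le_sup_right)
  have hb2 : finrank (ZMod 2) ↥((colSpan A (C1 ∩ C2)).map (prR (R1 ∪ R2))) ≤
      finrank (ZMod 2) ↥((colSpan A C1 ⊓ colSpan A C2).map (prR (R1 ∪ R2))) := by
    apply Submodule.finrank_mono
    apply Submodule.map_mono
    exact le_inf (colSpan_mono A Finset.inter_subset_left)
      (colSpan_mono A Finset.inter_subset_right)
  have hb2' := finrank_map_add_finrank_inf_ker (prR (V := V) (R1 ∪ R2))
    (colSpan A C1 ⊓ colSpan A C2)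
  rw [ker_prR_union] at hb2'
  have hUU : ((colSpan A C1 ⊓ colSpan A C2) ⊓
      (LinearMap.ker (prR (V := V) R1) ⊓ LinearMap.ker (prR (V := V) R2))) =
      ((colSpan A C1 ⊓ LinearMap.ker (prR (V := V) R1)) ⊓
       (colSpan A C2 ⊓ LinearMap.ker (prR (V := V) R2))) := by
    ac_rfl
  rw [hUU] at hb2'
  omega

private lemma matrix_rank_add_le {m n : Type} [Fintype m] [Fintype n]
    (M N : Matrix m n (ZMod 2)) : (M + N).rank ≤ M.rank + N.rank := by
  rw [Matrix.rank, Matrix.rank, Matrix.rank, Matrix.mulVecLin_add]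
  have hle : LinearMap.range (M.mulVecLin + N.mulVecLin) ≤
      LinearMap.range M.mulVecLin ⊔ LinearMap.range N.mulVecLin := by
    rintro x ⟨y, rfl⟩
    exact Submodule.mem_sup.2 ⟨M.mulVecLin y, ⟨y, rfl⟩, N.mulVecLin y, ⟨y, rfl⟩, rfl⟩
  refine (Submodule.finrank_mono hle).trans ?_
  have := Submodule.finrank_sup_add_finrank_inf_eq
    (LinearMap.range M.mulVecLin) (LinearMap.range N.mulVecLin)
  omega

private lemma rank_subMat_symm (A : Matrix V V (ZMod 2)) (hAs : ∀ x y, A x y = A y x)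
    (X Y : Finset V) : (subMat A X Y).rank = (subMat A Y X).rank := by
  rw [show subMat A Y X = (subMat A X Y)ᵀ from by ext a b; exact hAs _ _,
    Matrix.rank_transpose]

private lemma core_pivot (A B : Matrix V V (ZMod 2)) (v w : V) (Y1 Y2 : Finset V)
    (hwv : w ≠ v) (hv2 : v ∉ Y2) (hw2 : w ∉ Y2) (hw1 : w ∈ Y1)
    (hAvw : A w v = 1) (hAvv : A v v = 0) (hAs : ∀ x y, A x y = A y x)
    (hBw : ∀ y ∈ Y2, B w y = A v y)
    (hBx : ∀ x ∈ Y1, x ≠ w → ∀ y ∈ Y2, B x y = A x y + A v x * A w y + A w x * A v y) :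
    (subMat A (insert v Y1) (insert v Y2)).rank ≤ (subMat B Y1 Y2).rank + 1 := by
  set M : Matrix ↥(insert v Y1) ↥(insert v Y2) (ZMod 2) := subMat A (insert v Y1) (insert v Y2)
    with hMdef
  set r0 : ↥(insert v Y1) := ⟨w, Finset.mem_insert_of_mem hw1⟩ with hr0
  set c0 : ↥(insert v Y2) := ⟨v, Finset.mem_insert_self v Y2⟩ with hc0
  have hM00 : M r0 c0 = 1 := hAvw
  set Nm : Matrix ↥(insert v Y1) ↥(insert v Y1) (ZMod 2) :=
    fun r s => if s = r0 ∧ r ≠ r0 then M r c0 else 0 with hNm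
  set Pm : Matrix ↥(insert v Y2) ↥(insert v Y2) (ZMod 2) :=
    fun s c => if s = c0 ∧ c ≠ c0 then M r0 c else 0 with hPm
  have hNN : Nm * Nm = 0 := by
    ext r s
    rw [Matrix.mul_apply]
    refine Finset.sum_eq_zero fun t _ => ?_
    by_cases ht : t = r0
    · subst ht
      simp [hNm]
    · simp [hNm, ht]
  have hPP : Pm * Pm = 0 := by
    ext r s
    rw [Matrix.mul_apply]
    refine Finset.sum_eq_zero fun t _ => ?_
    by_cases ht : t = c0
    · subst ht
      simp [hPm]
    · simp [hPm, ht]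
  have hNmNm : Nm + Nm = 0 := by ext r s; exact CharTwo.add_self_eq_zero _
  have hPmPm : Pm + Pm = 0 := by ext r s; exact CharTwo.add_self_eq_zero _
  have hEE : (1 + Nm) * (1 + Nm) = 1 := by
    have expand : (1 + Nm) * (1 + Nm) = 1 + (Nm + Nm) + Nm * Nm := by noncomm_ring
    rw [expand, hNN, hNmNm, add_zero, add_zero]
  have hFF : (1 + Pm) * (1 + Pm) = 1 := by
    have expand : (1 + Pm) * (1 + Pm) = 1 + (Pm + Pm) + Pm * Pm := by noncomm_ring
    rw [expand, hPP, hPmPm, add_zero, add_zero]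
  have hdetE : IsUnit (1 + Nm).det :=
    IsUnit.of_mul_eq_one _ (by rw [← Matrix.det_mul, hEE, Matrix.det_one])
  have hdetF : IsUnit (1 + Pm).det :=
    IsUnit.of_mul_eq_one _ (by rw [← Matrix.det_mul, hFF, Matrix.det_one])
  have hrank : ((1 + Nm) * M * (1 + Pm)).rank = M.rank := by
    rw [Matrix.rank_mul_eq_left_of_isUnit_det _ _ hdetF,
      Matrix.rank_mul_eq_right_of_isUnit_det _ _ hdetE]
  set M1 := (1 + Nm) * M with hM1def
  have hM1 : ∀ r c, M1 r c = M r c + (if r = r0 then 0 else M r c0) * M r0 c := by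
    intro r c
    rw [hM1def, Matrix.add_mul, Matrix.one_mul, Matrix.add_apply, Matrix.mul_apply]
    congr 1
    rw [Fintype.sum_eq_single r0]
    · by_cases hr : r = r0 <;> simp [hNm, hr]
    · intro t ht
      simp [hNm, ht]
  have hM1c0 : ∀ r, M1 r c0 = if r = r0 then 1 else 0 := by
    intro r
    rw [hM1]
    by_cases hr : r = r0
    · simp [hr, hM00]
    · rw [if_neg hr, if_neg hr, hM00, mul_one]
      exact CharTwo.add_self_eq_zero _
  set M2 := M1 * (1 + Pm) with hM2def
  have hM2 : ∀ r c, M2 r c = M1 r c + (if r = r0 then 1 else 0) *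
      (if c = c0 then 0 else M r0 c) := by
    intro r c
    rw [hM2def, Matrix.mul_add, Matrix.mul_one, Matrix.add_apply, Matrix.mul_apply]
    congr 1
    rw [Fintype.sum_eq_single c0]
    · rw [hM1c0]
      by_cases hc : c = c0 <;> simp [hPm, hc]
    · intro t ht
      simp [hPm, ht]
  set S : Matrix ↥(insert v Y1) ↥(insert v Y2) (ZMod 2) :=
    fun r c => if r = r0 ∧ c = c0 then 1 else 0 with hS
  set Nh : Matrix ↥(insert v Y1) ↥(insert v Y2) (ZMod 2) :=
    fun r c => if r = r0 ∨ c = c0 then 0 else M r c + M r c0 * M r0 c with hNh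
  have hsplit : M2 = S + Nh := by
    ext r c
    rw [Matrix.add_apply, hM2, hM1]
    simp only [hS, hNh]
    by_cases hr : r = r0 <;> by_cases hc : c = c0
    · simp [hr, hc, hM00]
    · simp [hr, hc, hM00, CharTwo.add_self_eq_zero]
    · simp [hr, hc, hM00, CharTwo.add_self_eq_zero]
    · simp [hr, hc, hM00, CharTwo.add_self_eq_zero]
  have hSrank : S.rank ≤ 1 := by
    have hfact : S = (Matrix.of fun r (_ : Unit) => if r = r0 then (1 : ZMod 2) else 0) *
        (Matrix.of fun (_ : Unit) c => if c = c0 then (1 : ZMod 2) else 0) := by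
      ext r c
      rw [Matrix.mul_apply]
      simp only [Finset.univ_unique, Finset.sum_singleton, Matrix.of_apply]
      by_cases hr : r = r0 <;> by_cases hc : c = c0 <;> simp [hS, hr, hc]
    rw [hfact]
    refine (Matrix.rank_mul_le_left _ _).trans ?_
    refine (Matrix.rank_le_card_width _).trans ?_
    simp
  set Bsub : Matrix ↥Y1 ↥Y2 (ZMod 2) := subMat B Y1 Y2 with hBsub
  set yw : ↥Y1 := ⟨w, hw1⟩ with hyw
  set Pmat : Matrix ↥(insert v Y1) ↥Y1 (ZMod 2) := fun r y =>
    if (r : V) = v then (if y = yw then 1 else 0)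
    else if r = r0 then 0
    else (if (y : V) = (r : V) then 1 else 0) + (if y = yw then A w r else 0) with hPmat
  set Qmat : Matrix ↥Y2 ↥(insert v Y2) (ZMod 2) :=
    fun y c => if (c : V) = (y : V) then 1 else 0 with hQmat
  have hBQ : ∀ (y : ↥Y1) (c : ↥(insert v Y2)), (Bsub * Qmat) y c =
      if (c : V) ∈ Y2 then B y c else 0 := by
    intro y c
    rw [Matrix.mul_apply]
    by_cases hc : (c : V) ∈ Y2
    · rw [if_pos hc]
      rw [Fintype.sum_eq_single (⟨(c : V), hc⟩ : ↥Y2)]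
      · simp [hQmat, hBsub, subMat]
      · intro t ht
        rw [hQmat]
        simp only
        rw [if_neg fun h => ht (Subtype.ext h.symm), mul_zero]
    · rw [if_neg hc]
      refine Finset.sum_eq_zero fun t _ => ?_
      rw [hQmat]
      simp only
      have hne : ¬ ((c : V) = (t : V)) := fun h => hc (by rw [h]; exact t.2)
      rw [if_neg hne, mul_zero]
  have hNhfact : Nh = Pmat * (Bsub * Qmat) := by
    ext r c
    rw [Matrix.mul_apply]
    by_cases hcv : (c : V) = v
    · have hcc0 : c = c0 := Subtype.ext hcv
      rw [Finset.sum_eq_zero, hNh]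
      · simp [hcc0]
      · intro t _
        rw [hBQ]
        rw [if_neg (by rw [hcv]; exact hv2), mul_zero]
    · have hcY2 : (c : V) ∈ Y2 := by
        rcases Finset.mem_insert.1 c.2 with h | h
        · exact absurd h hcv
        · exact h
      have hcc0 : c ≠ c0 := fun h => hcv (congrArg Subtype.val h)
      by_cases hrv : (r : V) = v
      · have hrr0 : r ≠ r0 := fun h => hwv (by
          have h2 := congrArg Subtype.val h
          rw [hrv] at h2
          exact h2.symm)
        rw [Fintype.sum_eq_single yw]
        · rw [hBQ, if_pos hcY2]
          have hP : Pmat r yw = 1 := by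
            rw [hPmat]
            simp only
            rw [if_pos hrv]
            simp
          rw [hP, one_mul, hNh]
          simp only
          rw [if_neg (by tauto : ¬(r = r0 ∨ c = c0))]
          have e1 : M r c = A v (c : V) := by
            show A (r : V) (c : V) = A v (c : V)
            rw [hrv]
          have e2 : M r c0 = A v v := by
            show A (r : V) v = A v v
            rw [hrv]
          have e3 : (Bsub yw ⟨(c : V), hcY2⟩ : ZMod 2) = B w (c : V) := rfl
          rw [e1, e2, hAvv, zero_mul, add_zero]
          exact (hBw _ hcY2).symm
        · intro t ht
          have hP : Pmat r t = 0 := by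
            rw [hPmat]
            simp only
            rw [if_pos hrv, if_neg ht]
          rw [hP, zero_mul]
      · by_cases hrr0 : r = r0
        · have hz : ∀ t ∈ Finset.univ, Pmat r t * (Bsub * Qmat) t c = 0 := by
            intro t _
            have hP : Pmat r t = 0 := by
              rw [hPmat]
              simp only
              rw [if_neg hrv, if_pos hrr0]
            rw [hP, zero_mul]
          rw [Finset.sum_eq_zero hz, hNh]
          simp [hrr0]
        · have hrY1 : (r : V) ∈ Y1 := by
            rcases Finset.mem_insert.1 r.2 with h | h
            · exact absurd h hrv
            · exact h
          have hrw : (r : V) ≠ w := fun h => hrr0 (Subtype.ext h)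
          have hyryw : (⟨(r : V), hrY1⟩ : ↥Y1) ≠ yw := fun h => hrw (congrArg Subtype.val h)
          have hsum : ∀ t : ↥Y1, Pmat r t * (Bsub * Qmat) t c =
              (if t = (⟨(r : V), hrY1⟩ : ↥Y1) then B (r : V) (c : V) else 0) +
              (if t = yw then A w (r : V) * B w (c : V) else 0) := by
            intro t
            rw [hBQ, if_pos hcY2, hPmat]
            simp only
            rw [if_neg hrv, if_neg hrr0]
            by_cases h2 : t = yw
            · subst h2
              rw [if_neg (fun hh : (yw : V) = (r : V) => hrw hh.symm), if_pos rfl, zero_add,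
                if_neg hyryw.symm, if_pos rfl, zero_add]
            · by_cases h1 : t = (⟨(r : V), hrY1⟩ : ↥Y1)
              · rw [if_pos (by rw [h1] : ((t : V) = (r : V))), if_neg h2, add_zero, if_pos h1,
                  if_neg h2, add_zero, one_mul, h1]
              · rw [if_neg (fun hh : (t : V) = (r : V) => h1 (Subtype.ext hh)), if_neg h2,
                  add_zero, if_neg h1, if_neg h2, add_zero, zero_mul]
          rw [Finset.sum_congr rfl (fun t _ => hsum t), Finset.sum_add_distrib,
            Finset.sum_ite_eq' Finset.univ (⟨(r : V), hrY1⟩ : ↥Y1),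
            Finset.sum_ite_eq' Finset.univ yw,
            if_pos (Finset.mem_univ _), if_pos (Finset.mem_univ _), hNh]
          simp only
          rw [if_neg (by tauto : ¬(r = r0 ∨ c = c0))]
          have e1 : M r c = A (r : V) (c : V) := rfl
          have e2 : M r c0 = A (r : V) v := rfl
          have e3 : M r0 c = A w (c : V) := rfl
          rw [e1, e2, e3, hBx _ hrY1 hrw _ hcY2, hBw _ hcY2, add_assoc,
            CharTwo.add_self_eq_zero, add_zero, hAs (r : V) v]
  have hNhrank : Nh.rank ≤ Bsub.rank := by
    rw [hNhfact]
    exact (Matrix.rank_mul_le_right _ _).trans (Matrix.rank_mul_le_left _ _)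
  have h2rank : M2.rank = M.rank := by
    rw [hM2def, hM1def]
    exact hrank
  have hfin : M.rank ≤ S.rank + Nh.rank := by
    rw [← h2rank, hsplit]
    exact matrix_rank_add_le _ _
  omega

end BixbyAux
-- AUX END

section BixbyGlue

variable {V : Type} [Fintype V] [DecidableEq V]

open scoped Classical

set_option linter.unusedSectionVars false
set_option maxHeartbeats 1000000

private noncomputable def adjMat (G : SimpleGraph V) : Matrix V V (ZMod 2) :=
  Matrix.of fun i j => if G.Adj i j then (1 : ZMod 2) else 0

private lemma adjMat_symm (G : SimpleGraph V) : ∀ x y, adjMat G x y = adjMat G y x := by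
  intro x y
  simp only [adjMat, Matrix.of_apply]
  rw [G.adj_comm]

private lemma pivotToggle_not_left (G : SimpleGraph V) (v w y : V) :
    ¬ PivotToggle G v w v y := by
  have hA : ¬ SideA G v w v := fun h => G.irrefl h.1
  have hB : ¬ SideB G v w v := fun h => h.2.2 rfl
  have hC : ¬ SideC G v w v := fun h => G.irrefl h.1
  unfold PivotToggle
  tauto

private lemma pivot_entry_w (G : SimpleGraph V) {v w y : V} (hyv : y ≠ v) (hyw : y ≠ w) :
    adjMat (pivot G v w) w y = adjMat G v y := by
  have hyy : Equiv.swap v w y = y := Equiv.swap_apply_of_ne_of_ne hyv hyw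
  have hiff : (pivot G v w).Adj w y ↔ G.Adj v y := by
    show (w ≠ y ∧ Xor' (G.Adj (Equiv.swap v w w) (Equiv.swap v w y))
      (PivotToggle G v w (Equiv.swap v w w) (Equiv.swap v w y))) ↔ G.Adj v y
    rw [Equiv.swap_apply_right, hyy]
    constructor
    · rintro ⟨-, ⟨h1, -⟩ | ⟨h1, -⟩⟩
      · exact h1
      · exact absurd h1 (pivotToggle_not_left G v w y)
    · intro h
      exact ⟨Ne.symm hyw, Or.inl ⟨h, pivotToggle_not_left G v w y⟩⟩
  simp only [adjMat, Matrix.of_apply]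
  rw [if_congr hiff rfl rfl]

private lemma pivot_entry (G : SimpleGraph V) {v w x y : V}
    (hxv : x ≠ v) (hxw : x ≠ w) (hyv : y ≠ v) (hyw : y ≠ w) :
    adjMat (pivot G v w) x y = adjMat G x y + adjMat G v x * adjMat G w y
      + adjMat G w x * adjMat G v y := by
  have hxx : Equiv.swap v w x = x := Equiv.swap_apply_of_ne_of_ne hxv hxw
  have hyy : Equiv.swap v w y = y := Equiv.swap_apply_of_ne_of_ne hyv hyw
  by_cases hxy : x = y
  · subst hxy
    have h0 : adjMat (pivot G v w) x x = 0 := by simp [adjMat]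
    have h1 : adjMat G x x = 0 := by simp [adjMat]
    rw [h0, h1, zero_add, mul_comm (adjMat G w x)]
    exact (CharTwo.add_self_eq_zero _).symm
  · have hiff : (pivot G v w).Adj x y ↔ Xor' (G.Adj x y) (PivotToggle G v w x y) := by
      show (x ≠ y ∧ Xor' (G.Adj (Equiv.swap v w x) (Equiv.swap v w y))
        (PivotToggle G v w (Equiv.swap v w x) (Equiv.swap v w y))) ↔ _
      rw [hxx, hyy]
      exact and_iff_right hxy
    simp only [adjMat, Matrix.of_apply]
    rw [if_congr hiff rfl rfl]
    by_cases a1 : G.Adj x y <;> by_cases a2 : G.Adj v x <;> by_cases a3 : G.Adj w x <;>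
      by_cases a4 : G.Adj v y <;> by_cases a5 : G.Adj w y <;>
      · simp only [Xor', PivotToggle, SideA, SideB, SideC, a1, a2, a3, a4, a5, hxv, hxw, hyv,
          hyw, ne_eq, not_false_eq_true, not_true_eq_false, true_and, false_and, and_true,
          and_false, and_self, true_or, or_true, false_or, or_false, or_self, not_false_iff,
          if_true, if_false]
        try decide

end BixbyGlue

set_option maxHeartbeats 1000000 in
theorem cutRank_bixby {G : SimpleGraph V} {v w : V} (hvw : G.Adj v w)
    {X1 X2 Y1 Y2 : Finset V}
    (hX : X1 ∪ X2 = Finset.univ \ {v}) (hXd : Disjoint X1 X2)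
    (hY : Y1 ∪ Y2 = Finset.univ \ {v}) (hYd : Disjoint Y1 Y2) :
    cutRank G Finset.univ (X1 ∩ Y1) + cutRank G Finset.univ (X2 ∩ Y2) ≤
      cutRank G (Finset.univ \ {v}) X1 + cutRank (pivot G v w) (Finset.univ \ {v}) Y1 + 1 := by
  classical
  have hwv : w ≠ v := fun h => G.irrefl (h ▸ hvw)
  have compl : ∀ {Z1 Z2 : Finset V}, Z1 ∪ Z2 = Finset.univ \ {v} → Disjoint Z1 Z2 →
      (Finset.univ \ {v}) \ Z1 = Z2 := by
    intro Z1 Z2 hu hd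
    ext x
    simp only [Finset.mem_sdiff, Finset.mem_univ, true_and, Finset.mem_singleton]
    constructor
    · rintro ⟨hxv, hx1⟩
      have hm : x ∈ Z1 ∪ Z2 := by
        rw [hu]
        simp [hxv]
      rcases Finset.mem_union.1 hm with h | h
      · exact absurd h hx1
      · exact h
    · intro h
      have hx : x ∈ Finset.univ \ {v} := hu ▸ Finset.mem_union_right _ h
      refine ⟨by simpa using (Finset.mem_sdiff.1 hx).2, fun h1 => ?_⟩
      exact Finset.disjoint_left.1 hd h1 h
  have hnotv : ∀ {Z1 Z2 : Finset V}, Z1 ∪ Z2 = Finset.univ \ {v} → v ∉ Z1 := by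
    intro Z1 Z2 hu h
    have hm : v ∈ Z1 ∪ Z2 := Finset.mem_union_left _ h
    rw [hu] at hm
    simp at hm
  have hvX1 : v ∉ X1 := hnotv hX
  have hvX2 : v ∉ X2 := hnotv (Finset.union_comm X1 X2 ▸ hX)
  have hvY1 : v ∉ Y1 := hnotv hY
  have hvY2 : v ∉ Y2 := hnotv (Finset.union_comm Y1 Y2 ▸ hY)
  have hcoverX : ∀ x, x ≠ v → x ∈ X1 ∨ x ∈ X2 := by
    intro x hx
    have hm : x ∈ X1 ∪ X2 := by
      rw [hX]
      simp [hx]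
    exact Finset.mem_union.1 hm
  have hcoverY : ∀ x, x ≠ v → x ∈ Y1 ∨ x ∈ Y2 := by
    intro x hx
    have hm : x ∈ Y1 ∪ Y2 := by
      rw [hY]
      simp [hx]
    exact Finset.mem_union.1 hm
  have e1 : X1 ∩ insert v Y1 = X1 ∩ Y1 := by
    ext x
    simp only [Finset.mem_inter, Finset.mem_insert]
    constructor
    · rintro ⟨h1, rfl | h2⟩
      · exact absurd h1 hvX1
      · exact ⟨h1, h2⟩
    · rintro ⟨h1, h2⟩
      exact ⟨h1, Or.inr h2⟩
  have e4 : X2 ∩ insert v Y2 = X2 ∩ Y2 := by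
    ext x
    simp only [Finset.mem_inter, Finset.mem_insert]
    constructor
    · rintro ⟨h1, rfl | h2⟩
      · exact absurd h1 hvX2
      · exact ⟨h1, h2⟩
    · rintro ⟨h1, h2⟩
      exact ⟨h1, Or.inr h2⟩
  have e2 : X2 ∪ insert v Y2 = Finset.univ \ (X1 ∩ Y1) := by
    ext x
    simp only [Finset.mem_union, Finset.mem_insert, Finset.mem_sdiff, Finset.mem_univ, true_and,
      Finset.mem_inter]
    constructor
    · rintro (h | rfl | h) ⟨h1, h2⟩
      · exact Finset.disjoint_left.1 hXd h1 h
      · exact hvX1 h1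
      · exact Finset.disjoint_left.1 hYd h2 h
    · intro hnot
      by_cases hxv : x = v
      · exact Or.inr (Or.inl hxv)
      · rcases hcoverX x hxv with h | h
        · rcases hcoverY x hxv with h' | h'
          · exact absurd ⟨h, h'⟩ hnot
          · exact Or.inr (Or.inr h')
        · exact Or.inl h
  have e3 : X1 ∪ insert v Y1 = Finset.univ \ (X2 ∩ Y2) := by
    ext x
    simp only [Finset.mem_union, Finset.mem_insert, Finset.mem_sdiff, Finset.mem_univ, true_and,
      Finset.mem_inter]
    constructor
    · rintro (h | rfl | h) ⟨h1, h2⟩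
      · exact Finset.disjoint_left.1 hXd h h1
      · exact hvX2 h1
      · exact Finset.disjoint_left.1 hYd h h2
    · intro hnot
      by_cases hxv : x = v
      · exact Or.inr (Or.inl hxv)
      · rcases hcoverX x hxv with h | h
        · exact Or.inl h
        · rcases hcoverY x hxv with h' | h'
          · exact Or.inr (Or.inr h')
          · exact absurd ⟨h, h'⟩ hnot
  have ha1 : cutRank G (Finset.univ \ {v}) X1 = (subMat (adjMat G) X1 X2).rank := by
    rw [cutRank, compl hX hXd]
    rfl
  have ha2 : cutRank (pivot G v w) (Finset.univ \ {v}) Y1 =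
      (subMat (adjMat (pivot G v w)) Y1 Y2).rank := by
    rw [cutRank, compl hY hYd]
    rfl
  have hb1 : cutRank G Finset.univ (X1 ∩ Y1) =
      (subMat (adjMat G) (X1 ∩ Y1) (Finset.univ \ (X1 ∩ Y1))).rank := rfl
  have hb2 : cutRank G Finset.univ (X2 ∩ Y2) =
      (subMat (adjMat G) (X2 ∩ Y2) (Finset.univ \ (X2 ∩ Y2))).rank := rfl
  have hsub := subMat_submodular (adjMat G) X1 X2 (insert v Y1) (insert v Y2)
  rw [e1, e2, e3, e4] at hsub
  have hAsym := adjMat_symm G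
  have hBsym := adjMat_symm (pivot G v w)
  have hsymm := rank_subMat_symm (adjMat G) hAsym (Finset.univ \ (X2 ∩ Y2)) (X2 ∩ Y2)
  have hAwv : adjMat G w v = 1 := by simp [adjMat, hvw.symm]
  have hAvv : adjMat G v v = 0 := by simp [adjMat]
  have hwmem : w ∈ Y1 ∨ w ∈ Y2 := by
    have hm : w ∈ Y1 ∪ Y2 := by
      rw [hY]
      simp [hwv]
    exact Finset.mem_union.1 hm
  have hpiv : (subMat (adjMat G) (insert v Y1) (insert v Y2)).rank ≤
      (subMat (adjMat (pivot G v w)) Y1 Y2).rank + 1 := by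
    rcases hwmem with hw1 | hw2
    · have hwY2 : w ∉ Y2 := fun h => Finset.disjoint_left.1 hYd hw1 h
      refine core_pivot (adjMat G) (adjMat (pivot G v w)) v w Y1 Y2 hwv hvY2 hwY2 hw1 hAwv
        hAvv hAsym ?_ ?_
      · intro y hy
        exact pivot_entry_w G (fun h => hvY2 (h ▸ hy)) (fun h => hwY2 (h ▸ hy))
      · intro x hx hxw y hy
        exact pivot_entry G (fun h => hvY1 (h ▸ hx)) hxw (fun h => hvY2 (h ▸ hy))
          (fun h => hwY2 (h ▸ hy))
    · have hwY1 : w ∉ Y1 := fun h => Finset.disjoint_left.1 hYd h hw2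
      have h := core_pivot (adjMat G) (adjMat (pivot G v w)) v w Y2 Y1 hwv hvY1 hwY1 hw2 hAwv
        hAvv hAsym ?_ ?_
      · rw [rank_subMat_symm (adjMat G) hAsym (insert v Y1) (insert v Y2),
          rank_subMat_symm (adjMat (pivot G v w)) hBsym Y1 Y2]
        exact h
      · intro y hy
        exact pivot_entry_w G (fun h => hvY1 (h ▸ hy)) (fun h => hwY1 (h ▸ hy))
      · intro x hx hxw y hy
        exact pivot_entry G (fun h => hvY2 (h ▸ hx)) hxw (fun h => hvY1 (h ▸ hy))
          (fun h => hwY1 (h ▸ hy))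
  rw [ha1, ha2, hb1, hb2]
  omega
end

section
/- If two graphs G and H are pivot-equivalent, then ρ_G(X) = ρ_H(X) for every set X of vertices. -/
open Finset

variable {V : Type} [Fintype V] [DecidableEq V]

open scoped Classical

section Aux
set_option linter.unusedSectionVars false
variable {V : Type} [Fintype V] [DecidableEq V] {G : SimpleGraph V} {v w : V}

lemma pivotToggle_not_left_v (y : V) : ¬ PivotToggle G v w v y := by
  simp [PivotToggle, SideA, SideB, SideC]

lemma pivotToggle_not_left_w (y : V) : ¬ PivotToggle G v w w y := by
  simp [PivotToggle, SideA, SideB, SideC]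

lemma pivotToggle_comm_eq : PivotToggle G v w = PivotToggle G w v := by
  funext x y
  have hA : SideA G w v = SideB G v w := rfl
  have hB : SideB G w v = SideA G v w := rfl
  have hC : SideC G w v = SideC G v w := by
    funext z; exact propext and_comm
  refine propext ?_
  unfold PivotToggle
  rw [hA, hB, hC]
  tauto

lemma pivot_comm : pivot G v w = pivot G w v := by
  ext a b
  show a ≠ b ∧ _ ↔ a ≠ b ∧ _
  rw [Equiv.swap_comm v w, pivotToggle_comm_eq]

end Aux
section Aux2
set_option linter.unusedSectionVars false
variable {V : Type} [Fintype V] [DecidableEq V] {G : SimpleGraph V} {v w x y : V}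

lemma pivot_adj_iff : (pivot G v w).Adj x y ↔ x ≠ y ∧
    Xor' (G.Adj (Equiv.swap v w x) (Equiv.swap v w y))
      (PivotToggle G v w (Equiv.swap v w x) (Equiv.swap v w y)) := Iff.rfl

lemma pivot_entry_gen (hxv : x ≠ v) (hxw : x ≠ w) (hyv : y ≠ v) (hyw : y ≠ w) (hxy : x ≠ y) :
    (if (pivot G v w).Adj x y then (1:ZMod 2) else 0) =
      (if G.Adj x y then 1 else 0)
        + (if G.Adj v x then 1 else 0) * (if G.Adj w y then 1 else 0)
        + (if G.Adj w x then 1 else 0) * (if G.Adj v y then 1 else 0) := by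
  have hP := @pivot_adj_iff V _ _ G v w x y
  rw [Equiv.swap_apply_of_ne_of_ne hxv hxw, Equiv.swap_apply_of_ne_of_ne hyv hyw] at hP
  by_cases h0 : G.Adj x y <;> by_cases h1 : G.Adj v x <;> by_cases h2 : G.Adj w x <;>
    by_cases h3 : G.Adj v y <;> by_cases h4 : G.Adj w y <;>
    · simp [hP, PivotToggle, SideA, SideB, SideC, Xor', h0, h1, h2, h3, h4,
        hxv, hxw, hyv, hyw, hxy]
      try decide

end Aux2
section Aux3
set_option linter.unusedSectionVars false
variable {V : Type} [Fintype V] [DecidableEq V] {G : SimpleGraph V} {v w x y : V}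

lemma pivot_adj_v_right (hyv : y ≠ v) (hyw : y ≠ w) :
    (pivot G v w).Adj v y ↔ G.Adj w y := by
  rw [pivot_adj_iff, Equiv.swap_apply_left, Equiv.swap_apply_of_ne_of_ne hyv hyw]
  simp [Xor', Xor, pivotToggle_not_left_w, Ne.symm hyv]

lemma pivot_adj_w_right (hyv : y ≠ v) (hyw : y ≠ w) :
    (pivot G v w).Adj w y ↔ G.Adj v y := by
  rw [pivot_adj_iff, Equiv.swap_apply_right, Equiv.swap_apply_of_ne_of_ne hyv hyw]
  simp [Xor', Xor, pivotToggle_not_left_v, Ne.symm hyw]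

lemma pivot_adj_left_v (hxv : x ≠ v) (hxw : x ≠ w) :
    (pivot G v w).Adj x v ↔ G.Adj x w := by
  rw [(pivot G v w).adj_comm, pivot_adj_v_right hxv hxw, G.adj_comm]

lemma pivot_adj_left_w (hxv : x ≠ v) (hxw : x ≠ w) :
    (pivot G v w).Adj x w ↔ G.Adj x v := by
  rw [(pivot G v w).adj_comm, pivot_adj_w_right hxv hxw, G.adj_comm]

lemma pivot_adj_vw (hvw : G.Adj v w) : (pivot G v w).Adj v w := by
  rw [pivot_adj_iff, Equiv.swap_apply_left, Equiv.swap_apply_right]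
  exact ⟨hvw.ne, Or.inl ⟨hvw.symm, pivotToggle_not_left_w v⟩⟩

end Aux3
section Aux4

lemma zmod2_add_self (x : ZMod 2) : x + x = 0 := by revert x; decide

lemma mul_apply_delta_left {n m : Type} [Fintype n] [DecidableEq n]
    (f : n → n) (C : Matrix n m (ZMod 2)) (i : n) (j : m) :
    (Matrix.of (fun a b => if f a = b then (1 : ZMod 2) else 0) * C) i j = C (f i) j := by
  rw [Matrix.mul_apply]
  simp only [Matrix.of_apply, ite_mul, one_mul, zero_mul]
  rw [Finset.sum_ite_eq]
  simp

lemma mul_apply_two_spike {n m : Type} [Fintype n] [DecidableEq n]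
    (u t : n → ZMod 2) (p q : n) (C : Matrix n m (ZMod 2)) (i : n) (j : m) :
    (Matrix.of (fun a b => (if b = p then u a else 0) + (if b = q then t a else 0)) * C) i j
      = u i * C p j + t i * C q j := by
  rw [Matrix.mul_apply]
  simp only [Matrix.of_apply, add_mul, ite_mul, zero_mul, Finset.sum_add_distrib,
    Finset.sum_ite_eq']
  simp

lemma mul_apply_row_spike {n m : Type} [Fintype m] [DecidableEq m]
    (f : m → ZMod 2) (q : m) (C : Matrix n m (ZMod 2)) (x : n) (y : m) :
    (C * Matrix.of (fun a b => if a = q then f b else 0)) x y = C x q * f y := by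
  rw [Matrix.mul_apply]
  simp only [Matrix.of_apply, mul_ite, mul_zero]
  rw [Finset.sum_ite_eq']
  simp

lemma rank_one_add_mul_left {n m : Type} [Fintype n] [DecidableEq n] [Fintype m]
    (N : Matrix n n (ZMod 2)) (hN : N * N = 0) (C : Matrix n m (ZMod 2)) :
    ((1 + N) * C).rank = C.rank := by
  have hNN : N + N = 0 := by ext i j; exact zmod2_add_self _
  have h1 : (1 + N) * (1 + N) = 1 := by
    rw [Matrix.add_mul, Matrix.mul_add, Matrix.mul_add, Matrix.one_mul, Matrix.mul_one, hN,
      add_zero, Matrix.one_mul, add_assoc, hNN, add_zero]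
  have hdet : IsUnit (1 + N).det :=
    IsUnit.of_mul_eq_one _ (by rw [← Matrix.det_mul, h1, Matrix.det_one])
  exact Matrix.rank_mul_eq_right_of_isUnit_det _ _ hdet

lemma rank_mul_one_add_right {n m : Type} [Fintype n] [DecidableEq n] [Fintype m]
    (N : Matrix n n (ZMod 2)) (hN : N * N = 0) (C : Matrix m n (ZMod 2)) :
    (C * (1 + N)).rank = C.rank := by
  have hNN : N + N = 0 := by ext i j; exact zmod2_add_self _
  have h1 : (1 + N) * (1 + N) = 1 := by
    rw [Matrix.add_mul, Matrix.mul_add, Matrix.mul_add, Matrix.one_mul, Matrix.mul_one, hN,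
      add_zero, Matrix.one_mul, add_assoc, hNN, add_zero]
  have hdet : IsUnit (1 + N).det :=
    IsUnit.of_mul_eq_one _ (by rw [← Matrix.det_mul, h1, Matrix.det_one])
  exact Matrix.rank_mul_eq_left_of_isUnit_det _ _ hdet

end Aux4
section Aux5
set_option linter.unusedSectionVars false
variable {V : Type} [Fintype V] [DecidableEq V] {G : SimpleGraph V} {v w : V}

lemma cutRank_pivot_both (hvw : G.Adj v w) {X : Finset V} (hv : v ∈ X) (hw : w ∈ X) :
    cutRank (pivot G v w) Finset.univ X = cutRank G Finset.univ X := by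
  classical
  have hYv : ∀ j : ↥(Finset.univ \ X), (j : V) ≠ v :=
    fun j h => (Finset.mem_sdiff.mp j.2).2 (h ▸ hv)
  have hYw : ∀ j : ↥(Finset.univ \ X), (j : V) ≠ w :=
    fun j h => (Finset.mem_sdiff.mp j.2).2 (h ▸ hw)
  have hXY : ∀ (i : ↥X) (j : ↥(Finset.univ \ X)), (i : V) ≠ (j : V) :=
    fun i j h => (Finset.mem_sdiff.mp j.2).2 (h ▸ i.2)
  set A : Matrix ↥X ↥(Finset.univ \ X) (ZMod 2) :=
    Matrix.of fun i j => if G.Adj i.1 j.1 then 1 else 0 with hA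
  set B : Matrix ↥X ↥(Finset.univ \ X) (ZMod 2) :=
    Matrix.of fun i j => if (pivot G v w).Adj i.1 j.1 then 1 else 0 with hB
  have hvw' : v ≠ w := hvw.ne
  set vX : ↥X := ⟨v, hv⟩ with hvX
  set wX : ↥X := ⟨w, hw⟩ with hwX
  set σ : ↥X ≃ ↥X := Equiv.swap vX wX with hσ
  set u : ↥X → ZMod 2 := fun i => if i = vX ∨ i = wX then 0 else
    (if G.Adj v i.1 then 1 else 0) with hu
  set t : ↥X → ZMod 2 := fun i => if i = vX ∨ i = wX then 0 else
    (if G.Adj w i.1 then 1 else 0) with ht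
  set S : Matrix ↥X ↥X (ZMod 2) := Matrix.of fun a b => if σ a = b then 1 else 0 with hS
  set N : Matrix ↥X ↥X (ZMod 2) :=
    Matrix.of fun a b => (if b = vX then u a else 0) + (if b = wX then t a else 0) with hN
  have hNN : N * N = 0 := by
    ext i k
    rw [hN, mul_apply_two_spike u t vX wX]
    simp [hu, ht]
  have hSS : S * S = 1 := by
    ext i k
    rw [hS, mul_apply_delta_left]
    simp [Matrix.one_apply, hS, Equiv.swap_apply_self, hσ]
  have hBeq : B = (1 + N) * (S * A) := by
    ext i j
    rw [Matrix.add_mul, Matrix.one_mul, Matrix.add_apply, hN, mul_apply_two_spike u t vX wX,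
      hS, mul_apply_delta_left, mul_apply_delta_left, mul_apply_delta_left,
      hσ, Equiv.swap_apply_left, Equiv.swap_apply_right]
    by_cases hiv : i = vX
    · subst hiv
      simp only [hu, ht, if_pos (Or.inl rfl), zero_mul, add_zero, Equiv.swap_apply_left]
      show (if (pivot G v w).Adj v j.1 then (1:ZMod 2) else 0) = (if G.Adj w j.1 then 1 else 0)
      rw [if_congr (pivot_adj_v_right (hYv j) (hYw j)) rfl rfl]
    · by_cases hiw : i = wX
      · subst hiw
        simp only [hu, ht, if_pos (Or.inr rfl), zero_mul, add_zero, Equiv.swap_apply_right]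
        show (if (pivot G v w).Adj w j.1 then (1:ZMod 2) else 0) = (if G.Adj v j.1 then 1 else 0)
        rw [if_congr (pivot_adj_w_right (hYv j) (hYw j)) rfl rfl]
      · have hσi : σ i = i := Equiv.swap_apply_of_ne_of_ne hiv hiw
        rw [hσi]
        simp only [hu, ht, if_neg (by tauto : ¬ (i = vX ∨ i = wX))]
        have hiv' : (i : V) ≠ v := fun h => hiv (Subtype.ext h)
        have hiw' : (i : V) ≠ w := fun h => hiw (Subtype.ext h)
        show (if (pivot G v w).Adj i.1 j.1 then (1:ZMod 2) else 0) = _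
        rw [pivot_entry_gen hiv' hiw' (hYv j) (hYw j) (hXY i j)]
        show _ = (if G.Adj i.1 j.1 then (1:ZMod 2) else 0)
          + ((if G.Adj v i.1 then (1:ZMod 2) else 0) * (if G.Adj w j.1 then 1 else 0)
          + (if G.Adj w i.1 then (1:ZMod 2) else 0) * (if G.Adj v j.1 then 1 else 0))
        ring
  have hdetS : IsUnit S.det :=
    IsUnit.of_mul_eq_one _ (by rw [← Matrix.det_mul, hSS, Matrix.det_one])
  show B.rank = A.rank
  rw [hBeq, rank_one_add_mul_left N hNN, Matrix.rank_mul_eq_right_of_isUnit_det S A hdetS]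

end Aux5
section Aux6

lemma mul_apply_col_spike {n m : Type} [Fintype n] [DecidableEq n]
    (f : n → ZMod 2) (q : n) (C : Matrix n m (ZMod 2)) (x : n) (y : m) :
    (Matrix.of (fun a b => if b = q then f a else 0) * C) x y = f x * C q y := by
  rw [Matrix.mul_apply]
  simp only [Matrix.of_apply, ite_mul, zero_mul]
  rw [Finset.sum_ite_eq']
  simp

end Aux6

section Aux7
set_option linter.unusedSectionVars false
variable {V : Type} [Fintype V] [DecidableEq V] {G : SimpleGraph V} {v w : V}

lemma adj_ite_comm (G : SimpleGraph V) (x y : V) :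
    (if G.Adj x y then (1 : ZMod 2) else 0) = (if G.Adj y x then 1 else 0) :=
  if_congr (G.adj_comm x y) rfl rfl

lemma cutRank_pivot_mixed (hvw : G.Adj v w) {X : Finset V} (hv : v ∈ X) (hw : w ∉ X) :
    cutRank (pivot G v w) Finset.univ X = cutRank G Finset.univ X := by
  classical
  have hwY' : w ∈ Finset.univ \ X := Finset.mem_sdiff.mpr ⟨Finset.mem_univ w, hw⟩
  have hXv : ∀ i : ↥X, (i : V) ≠ w := fun i h => hw (h ▸ i.2)
  have hYv : ∀ j : ↥(Finset.univ \ X), (j : V) ≠ v :=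
    fun j h => (Finset.mem_sdiff.mp j.2).2 (h ▸ hv)
  have hXY : ∀ (i : ↥X) (j : ↥(Finset.univ \ X)), (i : V) ≠ (j : V) :=
    fun i j h => (Finset.mem_sdiff.mp j.2).2 (h ▸ i.2)
  set A : Matrix ↥X ↥(Finset.univ \ X) (ZMod 2) :=
    Matrix.of fun i j => if G.Adj i.1 j.1 then 1 else 0 with hA
  set B : Matrix ↥X ↥(Finset.univ \ X) (ZMod 2) :=
    Matrix.of fun i j => if (pivot G v w).Adj i.1 j.1 then 1 else 0 with hB
  set vX : ↥X := ⟨v, hv⟩ with hvX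
  set wY : ↥(Finset.univ \ X) := ⟨w, hwY'⟩ with hwYdef
  set p : ↥X → ZMod 2 := fun i => if i = vX then 0 else
    (if G.Adj v i.1 then 1 else 0) + (if G.Adj w i.1 then 1 else 0) with hp
  set q : ↥(Finset.univ \ X) → ZMod 2 := fun j => if j = wY then 0 else
    (if G.Adj v j.1 then 1 else 0) + (if G.Adj w j.1 then 1 else 0) with hq
  set Np : Matrix ↥X ↥X (ZMod 2) :=
    Matrix.of (fun a b => if b = vX then p a else 0) with hNp
  set Nq : Matrix ↥(Finset.univ \ X) ↥(Finset.univ \ X) (ZMod 2) :=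
    Matrix.of (fun a b => if a = wY then q b else 0) with hNq
  have hNpNp : Np * Np = 0 := by
    ext i k
    rw [hNp, mul_apply_col_spike p vX]
    simp [hp]
  have hNqNq : Nq * Nq = 0 := by
    ext i k
    rw [hNq, mul_apply_row_spike q wY]
    simp [hq]
  have hAvw : A vX wY = 1 := by show (if G.Adj v w then (1 : ZMod 2) else 0) = 1; rw [if_pos hvw]
  have hRHS : ∀ i j, (((1 + Np) * A * (1 + Nq) : Matrix ↥X ↥(Finset.univ \ X) (ZMod 2))) i j
      = A i j + p i * A vX j + (A i wY + p i * A vX wY) * q j := by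
    intro i j
    rw [Matrix.mul_add, Matrix.mul_one, Matrix.add_apply,
      hNq, mul_apply_row_spike q wY, Matrix.add_mul, Matrix.one_mul, Matrix.add_apply,
      Matrix.add_apply, hNp, mul_apply_col_spike p vX, mul_apply_col_spike p vX]
  have hBeq : B = ((1 + Np) * A * (1 + Nq) : Matrix ↥X ↥(Finset.univ \ X) (ZMod 2)) := by
    ext i j
    rw [hRHS i j, hAvw]
    by_cases hiv : i = vX
    · subst hiv
      simp only [hp, if_pos rfl, zero_mul, add_zero, zero_add]
      by_cases hjw : j = wY
      · subst hjw
        simp only [hq, if_pos rfl, mul_zero, add_zero]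
        show (if (pivot G v w).Adj v w then (1:ZMod 2) else 0) = _
        rw [if_pos (pivot_adj_vw hvw), hAvw]
      · have hjw' : (j : V) ≠ w := fun h => hjw (Subtype.ext h)
        simp only [hq, if_neg hjw]
        rw [hAvw]
        show (if (pivot G v w).Adj v j.1 then (1:ZMod 2) else 0)
          = (if G.Adj v j.1 then (1:ZMod 2) else 0)
            + (1 : ZMod 2) * ((if G.Adj v j.1 then (1:ZMod 2) else 0)
              + (if G.Adj w j.1 then 1 else 0))
        rw [if_congr (pivot_adj_v_right (hYv j) hjw') rfl rfl]
        generalize (if G.Adj v j.1 then (1:ZMod 2) else 0) = c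
        generalize (if G.Adj w j.1 then (1:ZMod 2) else 0) = d
        revert c d; decide
    · have hiv' : (i : V) ≠ v := fun h => hiv (Subtype.ext h)
      simp only [hp, if_neg hiv]
      by_cases hjw : j = wY
      · subst hjw
        simp only [hq, if_pos rfl, mul_zero, add_zero]
        show (if (pivot G v w).Adj i.1 w then (1:ZMod 2) else 0)
          = (if G.Adj i.1 w then (1:ZMod 2) else 0)
            + ((if G.Adj v i.1 then (1:ZMod 2) else 0)
              + (if G.Adj w i.1 then 1 else 0)) * (if G.Adj v w then (1:ZMod 2) else 0)
        rw [if_congr (pivot_adj_left_w hiv' (hXv i)) rfl rfl, if_pos hvw,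
          adj_ite_comm G i.1 w, adj_ite_comm G i.1 v]
        generalize (if G.Adj v i.1 then (1:ZMod 2) else 0) = a
        generalize (if G.Adj w i.1 then (1:ZMod 2) else 0) = b
        revert a b; decide
      · have hjw' : (j : V) ≠ w := fun h => hjw (Subtype.ext h)
        simp only [hq, if_neg hjw]
        show (if (pivot G v w).Adj i.1 j.1 then (1:ZMod 2) else 0)
          = (if G.Adj i.1 j.1 then (1:ZMod 2) else 0)
            + ((if G.Adj v i.1 then (1:ZMod 2) else 0)
              + (if G.Adj w i.1 then 1 else 0)) * (if G.Adj v j.1 then (1:ZMod 2) else 0)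
            + ((if G.Adj i.1 w then (1:ZMod 2) else 0)
              + ((if G.Adj v i.1 then (1:ZMod 2) else 0)
                + (if G.Adj w i.1 then 1 else 0)) * 1)
              * ((if G.Adj v j.1 then (1:ZMod 2) else 0) + (if G.Adj w j.1 then 1 else 0))
        rw [pivot_entry_gen hiv' (hXv i) (hYv j) hjw' (hXY i j), adj_ite_comm G i.1 w]
        generalize (if G.Adj v i.1 then (1:ZMod 2) else 0) = a
        generalize (if G.Adj w i.1 then (1:ZMod 2) else 0) = b
        generalize (if G.Adj v j.1 then (1:ZMod 2) else 0) = c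
        generalize (if G.Adj w j.1 then (1:ZMod 2) else 0) = d
        generalize (if G.Adj i.1 j.1 then (1:ZMod 2) else 0) = e
        revert a b c d e; decide
  show B.rank = A.rank
  rw [hBeq, Matrix.mul_assoc, rank_one_add_mul_left Np hNpNp,
    rank_mul_one_add_right Nq hNqNq A]

end Aux7
section Aux8
set_option linter.unusedSectionVars false
variable {V : Type} [Fintype V] [DecidableEq V] {G : SimpleGraph V} {v w : V}

lemma cutRank_compl (G : SimpleGraph V) (X : Finset V) :
    cutRank G Finset.univ X = cutRank G Finset.univ (Finset.univ \ X) := by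
  have hXX : Finset.univ \ (Finset.univ \ X) = X := by
    rw [Finset.sdiff_sdiff_self_left, Finset.univ_inter]
  unfold cutRank
  rw [hXX]
  unfold cutRankOn
  have htr : (Matrix.of fun (i : ↥X) (j : ↥(Finset.univ \ X)) =>
        if G.Adj i.1 j.1 then (1:ZMod 2) else 0)
      = (Matrix.of fun (i : ↥(Finset.univ \ X)) (j : ↥X) =>
        if G.Adj i.1 j.1 then (1:ZMod 2) else 0).transpose := by
    ext i j; exact adj_ite_comm G i.1 j.1
  rw [htr, Matrix.rank_transpose]

lemma cutRank_pivot (hvw : G.Adj v w) (X : Finset V) :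
    cutRank (pivot G v w) Finset.univ X = cutRank G Finset.univ X := by
  by_cases hv : v ∈ X <;> by_cases hw : w ∈ X
  · exact cutRank_pivot_both hvw hv hw
  · exact cutRank_pivot_mixed hvw hv hw
  · rw [pivot_comm]; exact cutRank_pivot_mixed hvw.symm hw hv
  · rw [cutRank_compl (pivot G v w), cutRank_compl G]
    exact cutRank_pivot_both hvw (Finset.mem_sdiff.mpr ⟨Finset.mem_univ v, hv⟩)
      (Finset.mem_sdiff.mpr ⟨Finset.mem_univ w, hw⟩)

end Aux8


theorem cutRank_pivotEquiv {G H : SimpleGraph V} (h : PivotEquiv G H)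
    (X : Finset V) : cutRank G Finset.univ X = cutRank H Finset.univ X := by
  induction h with
  | refl => rfl
  | tail hs hstep ih =>
    obtain ⟨v, w, hvw, rfl⟩ := hstep
    rw [cutRank_pivot hvw X]
    exact ih
end
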